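/- arXiv:2403.15963 — 4 statements merged into one kernel-verified Lean document; each statement's English description precedes it below -/
import Mathlib

section
/- Let λ ∈ ℝ and let f₁, f₂ : ℝ → ℝ be bounded C¹ functions with f₁(x) < f₂(x) for all x. If either (i) a(x)f₁′(x) + H(f₁(x),x) < λ < a(x)f₂′(x) + H(f₂(x),x) for all x ∈ ℝ, or (ii) a(x)f₁′(x) + H(f₁(x),x) > λ > a(x)f₂′(x) + H(f₂(x),x) for all x ∈ ℝ, then S^λ(f₁,f₂) is nonempty. -/
open MeasureTheory Filter Set

section AuxiliaryODE

open Topology intervalIntegral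


lemma ultraLim (U : Ultrafilter ℕ) (s : ℕ → ℝ) (R : ℝ) (h : ∀ n, |s n| ≤ R) :
    ∃ y, |y| ≤ R ∧ Tendsto s (U : Filter ℕ) (𝓝 y) := by
  have hsub : (U : Filter ℕ).map s ≤ 𝓟 (Icc (-R) R) := by
    rw [le_principal_iff, Filter.mem_map]
    refine Filter.univ_mem' fun n => ?_
    have := h n
    rw [abs_le] at this
    exact ⟨this.1, this.2⟩
  obtain ⟨y, hy, hle⟩ := (isCompact_Icc (a := -R) (b := R)).ultrafilter_le_nhds
    (U.map s) (by exact_mod_cast hsub)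
  exact ⟨y, abs_le.2 ⟨hy.1, hy.2⟩, hle⟩

lemma unifOfPointwise {U : Filter ℕ} [U.NeBot] {F : ℕ → ℝ → ℝ} {f : ℝ → ℝ} {A B C : ℝ}
    (hC : 0 ≤ C)
    (hlip : ∀ᶠ n in U, ∀ x ∈ Icc A B, ∀ y ∈ Icc A B, |F n x - F n y| ≤ C * |x - y|)
    (hconv : ∀ x ∈ Icc A B, Tendsto (fun n => F n x) U (𝓝 (f x))) :
    TendstoUniformlyOn F f U (Icc A B) := by
  have hflip : ∀ x ∈ Icc A B, ∀ y ∈ Icc A B, |f x - f y| ≤ C * |x - y| := by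
    intro x hx y hy
    have ht : Tendsto (fun n => |F n x - F n y|) U (𝓝 |f x - f y|) :=
      (((hconv x hx).sub (hconv y hy)).abs)
    exact le_of_tendsto ht (hlip.mono fun n hn => hn x hx y hy)
  rw [Metric.tendstoUniformlyOn_iff]
  intro ε hε
  set δ : ℝ := ε / (3 * (C + 1)) with hδdef
  have hδ : 0 < δ := by positivity
  -- finite subcover
  have hcover : Icc A B ⊆ ⋃ t ∈ Icc A B, Metric.ball t δ := fun t ht =>
    mem_biUnion ht (Metric.mem_ball_self hδ)
  obtain ⟨s, hs_sub, hs_fin, hs_cov⟩ :=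
    (isCompact_Icc (a := A) (b := B)).elim_finite_subcover_image
      (fun t _ => Metric.isOpen_ball) hcover
  have hev : ∀ᶠ n in U, ∀ t ∈ s, dist (f t) (F n t) < ε / 3 := by
    rw [eventually_all_finite hs_fin]
    intro t ht
    have := hconv t (hs_sub ht)
    have : Tendsto (fun n => dist (f t) (F n t)) U (𝓝 0) := by
      have h2 : Tendsto (fun n => dist (F n t) (f t)) U (𝓝 0) :=
        tendsto_iff_dist_tendsto_zero.mp (hconv t (hs_sub ht))
      simpa [dist_comm] using h2
    exact (this.eventually (eventually_lt_nhds (by positivity : (0:ℝ) < ε/3)))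
  filter_upwards [hev, hlip] with n hn hlipn
  intro x hx
  obtain ⟨t, hts, hxt⟩ : ∃ t ∈ s, x ∈ Metric.ball t δ := by
    have := hs_cov hx
    simpa using this
  have ht : t ∈ Icc A B := hs_sub hts
  have h1 : |f x - f t| ≤ C * |x - t| := hflip x hx t ht
  have h2 : |F n t - F n x| ≤ C * |t - x| := hlipn t ht x hx
  have hxtd : |x - t| < δ := by
    rw [Metric.mem_ball, Real.dist_eq] at hxt; exact hxt
  have hCδ : C * |x - t| < (C + 1) * δ := by
    calc C * |x - t| ≤ C * δ := by nlinarith [abs_nonneg (x - t)]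
    _ < (C + 1) * δ := by nlinarith
  have h3 : (C + 1) * δ ≤ ε / 3 := by
    rw [hδdef]
    have hC1 : C + 1 ≠ 0 := by positivity
    have : (C + 1) * (ε / (3 * (C + 1))) = ε / 3 := by field_simp
    linarith
  calc dist (f x) (F n x) ≤ dist (f x) (f t) + dist (f t) (F n t) + dist (F n t) (F n x) :=
        dist_triangle4 _ _ _ _
    _ < ε / 3 + ε / 3 + ε / 3 := by
        apply add_lt_add_of_lt_of_lt (add_lt_add_of_lt_of_lt ?_ (hn t hts)) ?_
        · rw [Real.dist_eq]; exact lt_of_le_of_lt h1 (lt_of_lt_of_le hCδ h3)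
        · rw [Real.dist_eq]
          calc |F n t - F n x| ≤ C * |t - x| := h2
            _ < (C+1) * δ := by rw [abs_sub_comm]; exact hCδ
            _ ≤ ε / 3 := h3
    _ = ε := by ring


lemma intConv {U : Filter ℕ} [U.NeBot] {G : ℝ → ℝ → ℝ}
    (hG : Continuous fun q : ℝ × ℝ => G q.1 q.2)
    {A B R : ℝ} (hAB : A ≤ B) (hR : 0 ≤ R)
    {φ : ℕ → ℝ → ℝ} {f : ℝ → ℝ}
    (hbd : ∀ᶠ n in U, ∀ t ∈ Icc A B, |φ n t| ≤ R)
    (hfbd : ∀ t ∈ Icc A B, |f t| ≤ R)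
    (hcont : ∀ᶠ n in U, ContinuousOn (φ n) (Icc A B))
    (hfc : ContinuousOn f (Icc A B))
    (hconv : TendstoUniformlyOn φ f U (Icc A B)) :
    Tendsto (fun n => ∫ t in A..B, G t (φ n t)) U (𝓝 (∫ t in A..B, G t (f t))) := by
  rw [Metric.tendsto_nhds]
  intro ε hε
  set K : Set (ℝ × ℝ) := Icc A B ×ˢ Icc (-R) R with hK
  have hKc : IsCompact K := isCompact_Icc.prod isCompact_Icc
  have hGu : UniformContinuousOn (fun q : ℝ × ℝ => G q.1 q.2) K :=
    hKc.uniformContinuousOn_of_continuous hG.continuousOn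
  have hBA : (0:ℝ) < B - A + 1 := by linarith
  set ε' : ℝ := ε / (B - A + 1) with hε'def
  have hε' : 0 < ε' := div_pos hε hBA
  rw [Metric.uniformContinuousOn_iff] at hGu
  obtain ⟨δ, hδ, hδG⟩ := hGu ε' hε'
  have hfInt : IntervalIntegrable (fun t => G t (f t)) volume A B := by
    apply ContinuousOn.intervalIntegrable
    rw [uIcc_of_le hAB]
    exact hG.comp_continuousOn (continuousOn_id.prodMk hfc)
  have hev3 : ∀ᶠ n in U, ∀ t ∈ Icc A B, dist (f t) (φ n t) < δ :=
    (Metric.tendstoUniformlyOn_iff.mp hconv) δ hδ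
  filter_upwards [hbd, hcont, hev3] with n hbdn hcontn hclose
  have hφInt : IntervalIntegrable (fun t => G t (φ n t)) volume A B := by
    apply ContinuousOn.intervalIntegrable
    rw [uIcc_of_le hAB]
    exact hG.comp_continuousOn (continuousOn_id.prodMk hcontn)
  rw [dist_eq_norm, ← integral_sub hφInt hfInt]
  have hbound : ∀ t ∈ Set.uIoc A B, ‖G t (φ n t) - G t (f t)‖ ≤ ε' := by
    intro t ht
    have ht' : t ∈ Icc A B := mem_Icc_of_Ioc (by rwa [uIoc_of_le hAB] at ht)
    have hp : (t, φ n t) ∈ K := by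
      refine ⟨ht', ?_⟩
      have := hbdn t ht'; rw [abs_le] at this; exact ⟨this.1, this.2⟩
    have hq : (t, f t) ∈ K := by
      refine ⟨ht', ?_⟩
      have := hfbd t ht'; rw [abs_le] at this; exact ⟨this.1, this.2⟩
    have hdist : dist ((t, φ n t) : ℝ × ℝ) (t, f t) < δ := by
      have heq : dist ((t, φ n t) : ℝ × ℝ) (t, f t) = dist (φ n t) (f t) := by
        rw [Prod.dist_eq, dist_self]
        exact max_eq_right dist_nonneg
      rw [heq, dist_comm]
      exact hclose t ht'
    exact le_of_lt (hδG _ hp _ hq hdist)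
  calc ‖∫ t in A..B, (G t (φ n t) - G t (f t))‖ ≤ ε' * |B - A| :=
        intervalIntegral.norm_integral_le_of_norm_le_const hbound
    _ < ε := by
        rw [hε'def, abs_of_nonneg (by linarith : (0:ℝ) ≤ B - A)]
        rw [div_mul_eq_mul_div, div_lt_iff₀ hBA]
        nlinarith


noncomputable def tonAux (G : ℝ → ℝ → ℝ) (A c₀ h : ℝ) : ℕ → ℝ → ℝ
  | 0 => fun _ => c₀
  | (k+1) => fun x =>
      c₀ + ∫ t in A..(max A (min x (A + ((k : ℝ)+1) * h))), G t (tonAux G A c₀ h k (max (t - h) A))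

lemma tonAux_succ_def (G : ℝ → ℝ → ℝ) (A c₀ h : ℝ) (k : ℕ) (x : ℝ) :
    tonAux G A c₀ h (k+1) x =
      c₀ + ∫ t in A..(max A (min x (A + ((k : ℝ)+1) * h))),
        G t (tonAux G A c₀ h k (max (t - h) A)) := rfl

lemma tonAux_cont {G : ℝ → ℝ → ℝ} (hG : Continuous fun q : ℝ × ℝ => G q.1 q.2)
    (A c₀ h : ℝ) : ∀ k, Continuous (tonAux G A c₀ h k) := by
  intro k
  induction k with
  | zero => exact continuous_const
  | succ k ih =>
    have hψ : Continuous fun t => G t (tonAux G A c₀ h k (max (t - h) A)) := by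
      have : Continuous fun t : ℝ => ((t, tonAux G A c₀ h k (max (t - h) A)) : ℝ × ℝ) :=
        continuous_id.prodMk (ih.comp ((continuous_id.sub continuous_const).max continuous_const))
      exact hG.comp this
    have hprim : Continuous fun y => ∫ t in A..y, G t (tonAux G A c₀ h k (max (t - h) A)) :=
      intervalIntegral.continuous_primitive (fun a b => hψ.intervalIntegrable a b) A
    have : Continuous fun x => c₀ + (fun y => ∫ t in A..y, G t (tonAux G A c₀ h k (max (t - h) A)))
        (max A (min x (A + ((k : ℝ)+1) * h))) :=
      continuous_const.add
        (hprim.comp (continuous_const.max (continuous_id.min continuous_const)))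
    exact this

lemma tonAux_succ_eq {G : ℝ → ℝ → ℝ} (A c₀ : ℝ) {h : ℝ} (hh : 0 < h) :
    ∀ k : ℕ, ∀ x ≤ A + (k : ℝ) * h, tonAux G A c₀ h (k+1) x = tonAux G A c₀ h k x := by
  intro k
  induction k with
  | zero =>
    intro x hx
    norm_num at hx
    rw [tonAux_succ_def]
    rw [min_eq_left (by push_cast; nlinarith), max_eq_left hx,
      intervalIntegral.integral_same]
    simp [tonAux]
  | succ k ih =>
    intro x hx
    push_cast at hx
    rw [tonAux_succ_def G A c₀ h (k+1) x, tonAux_succ_def G A c₀ h k x]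
    congr 1
    rw [min_eq_left (by push_cast; nlinarith), min_eq_left (by push_cast; nlinarith)]
    apply intervalIntegral.integral_congr
    intro t ht
    rw [uIcc_of_le (le_max_left _ _)] at ht
    have htle : t ≤ A + ((k:ℝ)+1) * h := by
      rcases le_or_gt x A with hxa | hxa
      · rw [max_eq_left hxa] at ht
        have hk0 : (0:ℝ) ≤ (k:ℝ) := Nat.cast_nonneg k
        nlinarith [ht.1, ht.2, hh]
      · rw [max_eq_right (le_of_lt hxa)] at ht
        nlinarith [ht.2]
    have hkey : max (t - h) A ≤ A + (k:ℝ) * h := by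
      have hk0 : (0:ℝ) ≤ (k:ℝ) := Nat.cast_nonneg k
      apply max_le (by nlinarith) (by nlinarith)
    simp only []
    rw [ih _ hkey]

lemma tonAux_stab {G : ℝ → ℝ → ℝ} (A c₀ : ℝ) {h : ℝ} (hh : 0 < h) :
    ∀ k m : ℕ, k ≤ m → ∀ x ≤ A + (k : ℝ) * h, tonAux G A c₀ h m x = tonAux G A c₀ h k x := by
  intro k m hkm
  induction m, hkm using Nat.le_induction with
  | base => intro x _; rfl
  | succ m hkm ih =>
    intro x hx
    have hkm' : (k : ℝ) ≤ (m : ℝ) := by exact_mod_cast hkm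
    rw [tonAux_succ_eq A c₀ hh m x (by nlinarith [hh.le]), ih x hx]

noncomputable def tonSol (G : ℝ → ℝ → ℝ) (A c₀ h : ℝ) : ℝ → ℝ :=
  fun x => tonAux G A c₀ h (⌈(x - A) / h⌉₊ + 1) x

section
variable {G : ℝ → ℝ → ℝ} (A c₀ : ℝ) {h : ℝ}


lemma tonSol_eq_ton (hh : 0 < h) (k : ℕ) (x : ℝ) (hx : x ≤ A + (k : ℝ) * h) :
    tonSol G A c₀ h x = tonAux G A c₀ h (k+1) x := by
  set j := ⌈(x - A) / h⌉₊ with hjdef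
  have hxj : x ≤ A + (j : ℝ) * h := by
    have h1 : (x - A) / h ≤ (j : ℝ) := Nat.le_ceil _
    rw [div_le_iff₀ hh] at h1
    linarith
  show tonAux G A c₀ h (j+1) x = tonAux G A c₀ h (k+1) x
  rcases le_total (j+1) (k+1) with hle | hle
  · rw [tonAux_stab A c₀ hh (j+1) (k+1) hle x
      (by push_cast; nlinarith [hh.le])]
  · rw [tonAux_stab A c₀ hh (k+1) (j+1) hle x
      (by push_cast; nlinarith [hh.le])]

lemma tonSol_master (hh : 0 < h) (x : ℝ) :
    tonSol G A c₀ h x = c₀ + ∫ t in A..(max A x), G t (tonSol G A c₀ h (max (t - h) A)) := by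
  set j := ⌈(x - A) / h⌉₊ with hjdef
  have hxj : x ≤ A + (j : ℝ) * h := by
    have h1 : (x - A) / h ≤ (j : ℝ) := Nat.le_ceil _
    rw [div_le_iff₀ hh] at h1
    linarith
  have h1 : tonSol G A c₀ h x = tonAux G A c₀ h (j+1) x :=
    tonSol_eq_ton A c₀ hh j x hxj
  clear_value j
  rw [h1, tonAux_succ_def]
  have hmin : min x (A + ((j:ℝ)+1) * h) = x := min_eq_left (by nlinarith [hh.le])
  rw [hmin]
  congr 1
  rcases Nat.eq_zero_or_pos j with hj0 | hjpos
  · -- x ≤ A, integral over single point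
    have hxA : x ≤ A := by rw [hj0] at hxj; push_cast at hxj; linarith
    rw [max_eq_left hxA, intervalIntegral.integral_same, intervalIntegral.integral_same]
  · obtain ⟨i, rfl⟩ : ∃ i, j = i + 1 := ⟨j - 1, (Nat.succ_pred_eq_of_pos hjpos).symm⟩
    apply intervalIntegral.integral_congr
    intro t ht
    rw [uIcc_of_le (le_max_left _ _)] at ht
    have htle : t ≤ A + ((i:ℝ)+1) * h := by
      rcases le_total x A with hxa | hxa
      · rw [max_eq_left hxa] at ht
        have := ht.2
        have hi0 : (0:ℝ) ≤ (i:ℝ) := Nat.cast_nonneg i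
        push_cast
        nlinarith
      · rw [max_eq_right hxa] at ht
        have := ht.2
        push_cast at hxj ⊢
        linarith
    have hkey : max (t - h) A ≤ A + (i:ℝ) * h :=
      max_le (by push_cast at htle; nlinarith)
        (by have hi0 : (0:ℝ) ≤ (i:ℝ) := Nat.cast_nonneg i; nlinarith)
    simp only []
    rw [tonSol_eq_ton A c₀ hh i _ hkey]

lemma tonSol_cont (hG : Continuous fun q : ℝ × ℝ => G q.1 q.2) (hh : 0 < h) :
    Continuous (tonSol G A c₀ h) := by
  rw [continuous_iff_continuousAt]
  intro x
  set k := ⌈(x - A) / h⌉₊ with hkdef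
  have hxk : x < A + ((k:ℝ)+1) * h := by
    have h1 : (x - A) / h ≤ (k : ℝ) := Nat.le_ceil _
    rw [div_le_iff₀ hh] at h1
    nlinarith
  have hopen : ∀ᶠ y in 𝓝 x, tonSol G A c₀ h y = tonAux G A c₀ h (k+1+1) y := by
    have hmem : Set.Iio (A + ((k:ℝ)+1) * h) ∈ 𝓝 x :=
      isOpen_Iio.mem_nhds (show x ∈ Set.Iio (A + ((k:ℝ)+1) * h) from hxk)
    filter_upwards [hmem] with y hy
    have hy' : y < A + ((k:ℝ)+1) * h := hy
    exact tonSol_eq_ton A c₀ hh (k+1) y (by push_cast; linarith)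
  have hEE : tonSol G A c₀ h =ᶠ[𝓝 x] tonAux G A c₀ h (k+1+1) := hopen
  exact ((tonAux_cont hG A c₀ h (k+1+1)).continuousAt).congr hEE.symm
end

lemma exists_integral_solution {G : ℝ → ℝ → ℝ}
    (hG : Continuous fun q : ℝ × ℝ => G q.1 q.2)
    (hbound : ∀ A B : ℝ, ∃ C, 0 ≤ C ∧ ∀ x ∈ Icc A B, ∀ p : ℝ, |G x p| ≤ C)
    (A c₀ : ℝ) :
    ∃ f : ℝ → ℝ, f A = c₀ ∧ ContinuousOn f (Ici A) ∧
      ∀ x ∈ Ici A, f x = c₀ + ∫ t in A..x, G t (f t) := by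
  classical
  set UU : Ultrafilter ℕ := Ultrafilter.of atTop with hUU
  set U : Filter ℕ := (UU : Filter ℕ) with hU
  have hUne : U.NeBot := Ultrafilter.neBot _
  have hUle : U ≤ (atTop : Filter ℕ) := Ultrafilter.of_le _
  set hseq : ℕ → ℝ := fun n => 1 / ((n : ℝ) + 1) with hhseq
  have hpos : ∀ n, 0 < hseq n := fun n => by positivity
  have hto0 : Tendsto hseq atTop (𝓝 0) := tendsto_one_div_add_atTop_nhds_zero_nat
  set F : ℕ → ℝ → ℝ := fun n => tonSol G A c₀ (hseq n) with hF
  have hFcont : ∀ n, Continuous (F n) := fun n => tonSol_cont A c₀ hG (hpos n)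
  have hψcont : ∀ n, Continuous fun t => G t (F n (max (t - hseq n) A)) := by
    intro n
    have : Continuous fun t : ℝ => ((t, F n (max (t - hseq n) A)) : ℝ × ℝ) :=
      continuous_id.prodMk ((hFcont n).comp
        ((continuous_id.sub continuous_const).max continuous_const))
    exact hG.comp this
  have hFA : ∀ n, F n A = c₀ := by
    intro n
    rw [hF]
    simp only []
    rw [tonSol_master A c₀ (hpos n) A, max_self, intervalIntegral.integral_same, add_zero]
  -- equation on [A, ∞)
  have heqn : ∀ n, ∀ x, A ≤ x →
      F n x = c₀ + ∫ t in A..x, G t (F n (max (t - hseq n) A)) := by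
    intro n x hx
    have := tonSol_master (G := G) A c₀ (hpos n) x
    rwa [max_eq_right hx] at this
  -- Lipschitz bounds
  have hlip : ∀ B : ℝ, A ≤ B → ∃ C, 0 ≤ C ∧
      (∀ n, ∀ x ∈ Icc A B, ∀ y ∈ Icc A B, |F n x - F n y| ≤ C * |x - y|) ∧
      (∀ n, ∀ x ∈ Icc A B, |F n x| ≤ |c₀| + C * (B - A)) := by
    intro B hAB
    obtain ⟨C, hC0, hCB⟩ := hbound A B
    have hlipC : ∀ n, ∀ x ∈ Icc A B, ∀ y ∈ Icc A B, |F n x - F n y| ≤ C * |x - y| := by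
      intro n x hx y hy
      have hdiff : F n x - F n y = ∫ t in y..x, G t (F n (max (t - hseq n) A)) := by
        rw [heqn n x hx.1, heqn n y hy.1]
        have h1 : IntervalIntegrable (fun t => G t (F n (max (t - hseq n) A))) volume A x :=
          (hψcont n).intervalIntegrable _ _
        have h2 : IntervalIntegrable (fun t => G t (F n (max (t - hseq n) A))) volume A y :=
          (hψcont n).intervalIntegrable _ _
        rw [add_sub_add_left_eq_sub]
        rw [intervalIntegral.integral_interval_sub_left h1 h2]
      rw [hdiff]
      have hb : ∀ t ∈ Set.uIoc y x, ‖G t (F n (max (t - hseq n) A))‖ ≤ C := by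
        intro t ht
        have ht' : t ∈ Icc A B := by
          have h4 := Set.uIoc_subset_uIcc ht
          rw [uIcc_comm] at h4
          exact (uIcc_subset_Icc hx hy) h4
        exact hCB t ht' _
      exact intervalIntegral.norm_integral_le_of_norm_le_const hb
    refine ⟨C, hC0, hlipC, ?_⟩
    intro n x hx
    have hA : A ∈ Icc A B := ⟨le_rfl, hAB⟩
    have h1 := hlipC n x hx A hA
    rw [hFA n] at h1
    have h2 : |F n x| - |c₀| ≤ |F n x - c₀| := abs_sub_abs_le_abs_sub _ _
    have h3 : |x - A| ≤ B - A := by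
      rw [abs_of_nonneg (by linarith [hx.1])]
      linarith [hx.2]
    nlinarith
  -- pointwise limits
  have hex : ∀ x : ℝ, ∃ y, Tendsto (fun n => F n x) U (𝓝 y) := by
    intro x
    rcases le_total x A with hxA | hxA
    · refine ⟨c₀, ?_⟩
      have hcx : ∀ n, F n x = c₀ := by
        intro n
        rw [hF]
        simp only []
        rw [tonSol_master (G := G) A c₀ (hpos n) x, max_eq_left hxA,
          intervalIntegral.integral_same, add_zero]
      exact tendsto_const_nhds.congr fun n => (hcx n).symm
    · obtain ⟨C, hC0, hlipC, hbd⟩ := hlip x hxA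
      obtain ⟨y, _, hy⟩ := ultraLim UU (fun n => F n x) (|c₀| + C * (x - A))
        (fun n => hbd n x ⟨hxA, le_rfl⟩)
      exact ⟨y, hy⟩
  choose f hf using hex
  have hfA : f A = c₀ := by
    have hc : Tendsto (fun n => F n A) U (𝓝 c₀) :=
      tendsto_const_nhds.congr fun n => (hFA n).symm
    exact tendsto_nhds_unique (hf A) hc
  -- f inherits Lipschitz bounds
  have hflip : ∀ B, A ≤ B → ∃ C, 0 ≤ C ∧
      (∀ x ∈ Icc A B, ∀ y ∈ Icc A B, |f x - f y| ≤ C * |x - y|) ∧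
      (∀ x ∈ Icc A B, |f x| ≤ |c₀| + C * (B - A)) := by
    intro B hAB
    obtain ⟨C, hC0, hlipC, hbd⟩ := hlip B hAB
    refine ⟨C, hC0, ?_, ?_⟩
    · intro x hx y hy
      have ht : Tendsto (fun n => |F n x - F n y|) U (𝓝 |f x - f y|) :=
        ((hf x).sub (hf y)).abs
      exact le_of_tendsto ht (Eventually.of_forall fun n => hlipC n x hx y hy)
    · intro x hx
      exact le_of_tendsto (hf x).abs (Eventually.of_forall fun n => hbd n x hx)
  -- continuity of f on Ici A
  have hfcont : ContinuousOn f (Ici A) := by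
    intro x hx
    have hxA : A ≤ x := hx
    obtain ⟨C, hC0, hflipC, _⟩ := hflip (x+1) (by linarith)
    have hCon : ContinuousOn f (Icc A (x+1)) := by
      have hL : LipschitzOnWith (Real.toNNReal C) f (Icc A (x+1)) := by
        apply LipschitzOnWith.of_dist_le_mul
        intro y hy z hz
        rw [Real.dist_eq, Real.dist_eq]
        calc dist (f y) (f z) = |f y - f z| := Real.dist_eq _ _
          _ ≤ C * |y - z| := hflipC y hy z hz
          _ = Real.toNNReal C * |y - z| := by rw [Real.coe_toNNReal C hC0]
      exact hL.continuousOn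
    have hmem : Icc A (x+1) ∈ 𝓝[Ici A] x := by
      have h1 : Iic (x+1) ∈ 𝓝 x := Iic_mem_nhds (by linarith)
      have h2 := inter_mem_nhdsWithin (Ici A) h1
      rwa [Ici_inter_Iic] at h2
    exact (hCon.continuousWithinAt ⟨hx, by linarith⟩).mono_of_mem_nhdsWithin hmem
  -- pass to the limit in the integral equation
  have heqf : ∀ x, A ≤ x → f x = c₀ + ∫ t in A..x, G t (f t) := by
    intro x hx
    obtain ⟨C, hC0, hlipC, hbdC⟩ := hlip x hx
    obtain ⟨Cf, hCf0, hflipC, hfbdC⟩ := hflip x hx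
    set R := |c₀| + max C Cf * (x - A) with hR
    have hxA0 : (0:ℝ) ≤ x - A := by linarith
    have hR0 : 0 ≤ R :=
      add_nonneg (abs_nonneg _) (mul_nonneg (le_trans hC0 (le_max_left _ _)) hxA0)
    have hCR : |c₀| + C * (x - A) ≤ R :=
      add_le_add_right (mul_le_mul_of_nonneg_right (le_max_left _ _) hxA0) _
    have hCfR : |c₀| + Cf * (x - A) ≤ R :=
      add_le_add_right (mul_le_mul_of_nonneg_right (le_max_right _ _) hxA0) _
    have hunif : TendstoUniformlyOn F f U (Icc A x) :=
      unifOfPointwise hC0 (Eventually.of_forall hlipC) (fun y _ => hf y)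
    set φ : ℕ → ℝ → ℝ := fun n t => F n (max (t - hseq n) A) with hφ
    have hclampmem : ∀ n : ℕ, ∀ t ∈ Icc A x, max (t - hseq n) A ∈ Icc A x := by
      intro n t ht
      exact ⟨le_max_right _ _, max_le (by linarith [ht.2, (hpos n).le]) hx⟩
    have hφunif : TendstoUniformlyOn φ f U (Icc A x) := by
      rw [Metric.tendstoUniformlyOn_iff]
      intro ε hε
      have hev1 := (Metric.tendstoUniformlyOn_iff.mp hunif) (ε/2) (by positivity)
      have hev2 : ∀ᶠ n in U, Cf * hseq n < ε/2 := by
        have hcm : Tendsto (fun n => Cf * hseq n) atTop (𝓝 (Cf * 0)) := hto0.const_mul Cf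
        rw [mul_zero] at hcm
        exact Eventually.filter_mono hUle (hcm.eventually (eventually_lt_nhds (by positivity)))
      filter_upwards [hev1, hev2] with n h1 h2
      intro t ht
      have ht' : max (t - hseq n) A ∈ Icc A x := hclampmem n t ht
      have hd1 : |f t - f (max (t - hseq n) A)| ≤ Cf * |t - max (t - hseq n) A| :=
        hflipC t ht _ ht'
      have htt' : |t - max (t - hseq n) A| ≤ hseq n := by
        rw [abs_of_nonneg (by
          have : max (t - hseq n) A ≤ t := max_le (by linarith [(hpos n).le]) ht.1
          linarith)]
        have : t - hseq n ≤ max (t - hseq n) A := le_max_left _ _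
        linarith
      have hd2 : dist (f (max (t - hseq n) A)) (F n (max (t - hseq n) A)) < ε/2 := by
        have := h1 _ ht'
        exact this
      calc dist (f t) (φ n t)
          ≤ dist (f t) (f (max (t - hseq n) A)) + dist (f (max (t - hseq n) A)) (φ n t) :=
            dist_triangle _ _ _
        _ < Cf * hseq n + ε/2 := by
            apply add_lt_add_of_le_of_lt
            · rw [Real.dist_eq]
              calc |f t - f (max (t - hseq n) A)| ≤ Cf * |t - max (t - hseq n) A| := hd1
                _ ≤ Cf * hseq n := mul_le_mul_of_nonneg_left htt' hCf0
            · exact hd2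
        _ < ε/2 + ε/2 := by linarith
        _ = ε := by ring
    have hφbd : ∀ᶠ n in U, ∀ t ∈ Icc A x, |φ n t| ≤ R :=
      Eventually.of_forall fun n t ht => le_trans (hbdC n _ (hclampmem n t ht)) hCR
    have hfbd' : ∀ t ∈ Icc A x, |f t| ≤ R := fun t ht => le_trans (hfbdC t ht) hCfR
    have hφcont : ∀ᶠ n in U, ContinuousOn (φ n) (Icc A x) :=
      Eventually.of_forall fun n => ((hFcont n).comp
        ((continuous_id.sub continuous_const).max continuous_const)).continuousOn
    have hfc : ContinuousOn f (Icc A x) := hfcont.mono Icc_subset_Ici_self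
    have hint := intConv hG hx hR0 hφbd hfbd' hφcont hfc hφunif
    have hL : Tendsto (fun n => c₀ + ∫ t in A..x, G t (φ n t)) U
        (𝓝 (c₀ + ∫ t in A..x, G t (f t))) := tendsto_const_nhds.add hint
    have hL' : Tendsto (fun n => F n x) U (𝓝 (c₀ + ∫ t in A..x, G t (f t))) :=
      hL.congr fun n => (heqn n x hx).symm
    exact tendsto_nhds_unique (hf x) hL'
  exact ⟨f, hfA, hfcont, fun x hx => heqf x hx⟩

lemma mainCase
    (a : ℝ → ℝ) (H : ℝ → ℝ → ℝ)
    (ha_cont : Continuous a) (ha_pos : ∀ x, 0 < a x)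
    (hH_cont : Continuous fun q : ℝ × ℝ => H q.1 q.2)
    (lam : ℝ) (f₁ f₂ : ℝ → ℝ) (M : ℝ)
    (hM₁ : ∀ x, |f₁ x| ≤ M) (hM₂ : ∀ x, |f₂ x| ≤ M)
    (hd₁ : Differentiable ℝ f₁) (hd₂ : Differentiable ℝ f₂)
    (hlt : ∀ x, f₁ x < f₂ x)
    (h₁ : ∀ x, a x * deriv f₁ x + H (f₁ x) x < lam)
    (h₂ : ∀ x, lam < a x * deriv f₂ x + H (f₂ x) x) :
    ∃ f : ℝ → ℝ, ContDiff ℝ 1 f ∧ (∀ x, a x * deriv f x + H (f x) x = lam) ∧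
      ∀ x, f₁ x ≤ f x ∧ f x ≤ f₂ x := by
  classical
  have hc₁ : Continuous f₁ := hd₁.continuous
  have hc₂ : Continuous f₂ := hd₂.continuous
  set clamp : ℝ → ℝ → ℝ := fun x p => max (f₁ x) (min p (f₂ x)) with hclampdef
  set G : ℝ → ℝ → ℝ := fun x p => (lam - H (clamp x p) x) / a x with hGdef
  have hclamp_mem : ∀ x p, f₁ x ≤ clamp x p ∧ clamp x p ≤ f₂ x := by
    intro x p
    exact ⟨le_max_left _ _, max_le (hlt x).le (min_le_right _ _)⟩
  have hclamp_hi : ∀ x p, f₂ x ≤ p → clamp x p = f₂ x := by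
    intro x p hp
    rw [hclampdef]
    simp only []
    rw [min_eq_right hp, max_eq_right (hlt x).le]
  have hclamp_lo : ∀ x p, p ≤ f₁ x → clamp x p = f₁ x := by
    intro x p hp
    rw [hclampdef]
    simp only []
    rw [min_eq_left (le_trans hp (hlt x).le), max_eq_left hp]
  have hclamp_id : ∀ x p, f₁ x ≤ p → p ≤ f₂ x → clamp x p = p := by
    intro x p h1 h2
    rw [hclampdef]
    simp only []
    rw [min_eq_left h2, max_eq_right h1]
  have hGcont : Continuous fun q : ℝ × ℝ => G q.1 q.2 := by
    have hclc : Continuous fun q : ℝ × ℝ => clamp q.1 q.2 :=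
      (hc₁.comp continuous_fst).max (continuous_snd.min (hc₂.comp continuous_fst))
    have hHc : Continuous fun q : ℝ × ℝ => H (clamp q.1 q.2) q.1 :=
      hH_cont.comp (hclc.prodMk continuous_fst)
    exact (continuous_const.sub hHc).div (ha_cont.comp continuous_fst)
      fun q => (ha_pos q.1).ne'
  have hM0 : 0 ≤ M := le_trans (abs_nonneg _) (hM₁ 0)
  have hclampM : ∀ x p, |clamp x p| ≤ M := by
    intro x p
    rw [abs_le]
    constructor
    · linarith [(abs_le.mp (hM₁ x)).1, (hclamp_mem x p).1]
    · linarith [(abs_le.mp (hM₂ x)).2, (hclamp_mem x p).2]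
  have hbound : ∀ A B : ℝ, ∃ C, 0 ≤ C ∧ ∀ x ∈ Icc A B, ∀ p : ℝ, |G x p| ≤ C := by
    intro A B
    rcases le_or_gt A B with hAB | hAB
    · set K : Set (ℝ × ℝ) := Icc (-M) M ×ˢ Icc A B with hK
      have hKc : IsCompact K := isCompact_Icc.prod isCompact_Icc
      have hKne : K.Nonempty :=
        ⟨(0, A), Set.mk_mem_prod
          (mem_Icc.mpr ⟨show -M ≤ (0:ℝ) by linarith, hM0⟩)
          (mem_Icc.mpr ⟨le_rfl, hAB⟩)⟩
      have hφc : ContinuousOn (fun q : ℝ × ℝ => |(lam - H q.1 q.2) / a q.2|) K := by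
        apply Continuous.continuousOn
        exact ((continuous_const.sub hH_cont).div (ha_cont.comp continuous_snd)
          fun q => (ha_pos q.2).ne').abs
      obtain ⟨z, hzK, hzmax⟩ := hKc.exists_isMaxOn hKne hφc
      refine ⟨|(lam - H z.1 z.2) / a z.2|, abs_nonneg _, ?_⟩
      intro x hx p
      have hmem : ((clamp x p, x) : ℝ × ℝ) ∈ K := by
        refine ⟨?_, hx⟩
        exact abs_le.mp (hclampM x p)
      have := hzmax hmem
      simpa [hGdef] using this
    · exact ⟨0, le_rfl, fun x hx => absurd (hx.1.trans hx.2) (not_le.2 hAB)⟩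
  -- layer 1 solutions
  choose sol hsolA hsolCont hsolEq using
    fun n : ℕ => exists_integral_solution hGcont hbound (-(n:ℝ)) (f₁ (-(n:ℝ)))
  have hψcont : ∀ n : ℕ, ContinuousOn (fun t => G t (sol n t)) (Ici (-(n:ℝ))) := by
    intro n
    exact hGcont.comp_continuousOn (continuousOn_id.prodMk (hsolCont n))
  have hder : ∀ n : ℕ, ∀ x, -(n:ℝ) < x → HasDerivAt (sol n) (G x (sol n x)) x := by
    intro n x hx
    have hev : ∀ᶠ y in 𝓝 x, sol n y = f₁ (-(n:ℝ)) + ∫ t in (-(n:ℝ))..y, G t (sol n t) := by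
      filter_upwards [isOpen_Ioi.mem_nhds (show x ∈ Ioi (-(n:ℝ)) from hx)] with y hy
      exact hsolEq n y (show -(n:ℝ) ≤ y from le_of_lt hy)
    have hInt : IntervalIntegrable (fun t => G t (sol n t)) volume (-(n:ℝ)) x := by
      apply ContinuousOn.intervalIntegrable
      apply (hψcont n).mono
      rw [uIcc_of_le hx.le]
      exact Icc_subset_Ici_self
    have hmeas : StronglyMeasurableAtFilter (fun t => G t (sol n t)) (𝓝 x) volume := by
      apply ContinuousOn.stronglyMeasurableAtFilter isOpen_Ioi
        ((hψcont n).mono Ioi_subset_Ici_self)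
      exact hx
    have hca : ContinuousAt (fun t => G t (sol n t)) x :=
      (hψcont n).continuousAt (mem_nhds_iff.mpr ⟨Ioi (-(n:ℝ)), Ioi_subset_Ici_self, isOpen_Ioi, hx⟩)
    have hD : HasDerivAt (fun y => f₁ (-(n:ℝ)) + ∫ t in (-(n:ℝ))..y, G t (sol n t))
        (G x (sol n x)) x :=
      (intervalIntegral.integral_hasDerivAt_right hInt hmeas hca).const_add _
    exact hD.congr_of_eventuallyEq hev
  -- comparison: sol n stays in the strip on [-n, ∞)
  have hupper : ∀ n : ℕ, ∀ x, -(n:ℝ) ≤ x → sol n x ≤ f₂ x := by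
    intro n x hx
    by_contra hcon
    push_neg at hcon
    set A := -(n:ℝ) with hA
    set S := {y | y ∈ Icc A x ∧ sol n y ≤ f₂ y} with hS
    have hAS : A ∈ S := ⟨⟨le_rfl, hx⟩, by rw [hsolA n]; exact (hlt A).le⟩
    have hSb : BddAbove S := ⟨x, fun y hy => hy.1.2⟩
    have hSne : S.Nonempty := ⟨A, hAS⟩
    set z := sSup S with hz
    have hzIcc : z ∈ Icc A x := ⟨le_csSup hSb hAS, csSup_le hSne fun y hy => hy.1.2⟩
    have hScl : IsClosed S := by
      have hu : ContinuousOn (fun y => sol n y - f₂ y) (Icc A x) :=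
        ((hsolCont n).mono Icc_subset_Ici_self).sub hc₂.continuousOn
      have hSeq : S = Icc A x ∩ (fun y => sol n y - f₂ y) ⁻¹' (Iic 0) := by
        ext y
        simp only [hS, mem_setOf_eq, mem_inter_iff, mem_preimage, mem_Iic, sub_nonpos]
      rw [hSeq]
      exact hu.preimage_isClosed_of_isClosed isClosed_Icc isClosed_Iic
    have hzS : z ∈ S := hScl.csSup_mem hSne hSb
    have hzx : z < x := by
      rcases eq_or_lt_of_le hzIcc.2 with heq | hlt'
      · exfalso; rw [heq] at hzS; exact absurd hzS.2 (not_le.2 hcon)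
      · exact hlt'
    have hgt : ∀ y, z < y → y ≤ x → f₂ y < sol n y := by
      intro y hzy hyx
      by_contra hc
      push_neg at hc
      have hyS : y ∈ S := ⟨⟨le_trans hzIcc.1 hzy.le, hyx⟩, hc⟩
      exact absurd (le_csSup hSb hyS) (not_le.2 hzy)
    have hanti : StrictAntiOn (fun y => sol n y - f₂ y) (Icc z x) := by
      apply strictAntiOn_of_deriv_neg (convex_Icc z x)
      · exact ((hsolCont n).mono fun y hy => le_trans hzIcc.1 hy.1).sub hc₂.continuousOn
      · intro y hy
        rw [interior_Icc] at hy
        have hyA : A < y := lt_of_le_of_lt hzIcc.1 hy.1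
        have hdy : HasDerivAt (fun y => sol n y - f₂ y) (G y (sol n y) - deriv f₂ y) y :=
          (hder n y hyA).sub (hd₂ y).hasDerivAt
        rw [hdy.deriv]
        have hf2y : f₂ y < sol n y := hgt y hy.1 hy.2.le
        have hGval : G y (sol n y) = (lam - H (f₂ y) y) / a y := by
          rw [hGdef]
          simp only []
          rw [hclamp_hi y (sol n y) hf2y.le]
        rw [hGval]
        have hlt2 : (lam - H (f₂ y) y) / a y < deriv f₂ y := by
          rw [div_lt_iff₀ (ha_pos y)]
          nlinarith [h₂ y, ha_pos y]
        linarith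
    have hx1 : sol n x - f₂ x < sol n z - f₂ z :=
      hanti ⟨le_rfl, hzx.le⟩ ⟨hzx.le, le_rfl⟩ hzx
    have := hzS.2
    linarith
  have hlower : ∀ n : ℕ, ∀ x, -(n:ℝ) ≤ x → f₁ x ≤ sol n x := by
    intro n x hx
    by_contra hcon
    push_neg at hcon
    set A := -(n:ℝ) with hA
    set S := {y | y ∈ Icc A x ∧ f₁ y ≤ sol n y} with hS
    have hAS : A ∈ S := ⟨⟨le_rfl, hx⟩, by rw [hsolA n]⟩
    have hSb : BddAbove S := ⟨x, fun y hy => hy.1.2⟩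
    have hSne : S.Nonempty := ⟨A, hAS⟩
    set z := sSup S with hz
    have hzIcc : z ∈ Icc A x := ⟨le_csSup hSb hAS, csSup_le hSne fun y hy => hy.1.2⟩
    have hScl : IsClosed S := by
      have hu : ContinuousOn (fun y => f₁ y - sol n y) (Icc A x) :=
        hc₁.continuousOn.sub ((hsolCont n).mono Icc_subset_Ici_self)
      have hSeq : S = Icc A x ∩ (fun y => f₁ y - sol n y) ⁻¹' (Iic 0) := by
        ext y
        simp only [hS, mem_setOf_eq, mem_inter_iff, mem_preimage, mem_Iic, sub_nonpos]
      rw [hSeq]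
      exact hu.preimage_isClosed_of_isClosed isClosed_Icc isClosed_Iic
    have hzS : z ∈ S := hScl.csSup_mem hSne hSb
    have hzx : z < x := by
      rcases eq_or_lt_of_le hzIcc.2 with heq | hlt'
      · exfalso; rw [heq] at hzS; exact absurd hzS.2 (not_le.2 hcon)
      · exact hlt'
    have hgt : ∀ y, z < y → y ≤ x → sol n y < f₁ y := by
      intro y hzy hyx
      by_contra hc
      push_neg at hc
      have hyS : y ∈ S := ⟨⟨le_trans hzIcc.1 hzy.le, hyx⟩, hc⟩
      exact absurd (le_csSup hSb hyS) (not_le.2 hzy)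
    have hmono : StrictMonoOn (fun y => sol n y - f₁ y) (Icc z x) := by
      apply strictMonoOn_of_deriv_pos (convex_Icc z x)
      · exact ((hsolCont n).mono fun y hy => le_trans hzIcc.1 hy.1).sub hc₁.continuousOn
      · intro y hy
        rw [interior_Icc] at hy
        have hyA : A < y := lt_of_le_of_lt hzIcc.1 hy.1
        have hdy : HasDerivAt (fun y => sol n y - f₁ y) (G y (sol n y) - deriv f₁ y) y :=
          (hder n y hyA).sub (hd₁ y).hasDerivAt
        rw [hdy.deriv]
        have hf1y : sol n y < f₁ y := hgt y hy.1 hy.2.le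
        have hGval : G y (sol n y) = (lam - H (f₁ y) y) / a y := by
          rw [hGdef]
          simp only []
          rw [hclamp_lo y (sol n y) hf1y.le]
        rw [hGval]
        have hlt2 : deriv f₁ y < (lam - H (f₁ y) y) / a y := by
          rw [lt_div_iff₀ (ha_pos y)]
          nlinarith [h₁ y, ha_pos y]
        linarith
    have hx1 : sol n z - f₁ z < sol n x - f₁ x :=
      hmono ⟨le_rfl, hzx.le⟩ ⟨hzx.le, le_rfl⟩ hzx
    have := hzS.2
    linarith
  -- layer 2 : limit n → ∞
  set UU : Ultrafilter ℕ := Ultrafilter.of atTop with hUU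
  set U : Filter ℕ := (UU : Filter ℕ) with hU
  have hUne : U.NeBot := Ultrafilter.neBot _
  have hUle : U ≤ (atTop : Filter ℕ) := Ultrafilter.of_le _
  set fseq : ℕ → ℝ → ℝ := fun n x => sol n (max x (-(n:ℝ))) with hfseq
  have hfseqbd : ∀ n x, |fseq n x| ≤ M := by
    intro n x
    have hmem : -(n:ℝ) ≤ max x (-(n:ℝ)) := le_max_right _ _
    have hl := hlower n _ hmem
    have hu := hupper n _ hmem
    rw [abs_le]
    constructor
    · linarith [(abs_le.mp (hM₁ (max x (-(n:ℝ))))).1]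
    · linarith [(abs_le.mp (hM₂ (max x (-(n:ℝ))))).2]
  have hfseqcont : ∀ n, Continuous (fseq n) :=
    fun n => (hsolCont n).comp_continuous (continuous_id.max continuous_const)
      (fun x => mem_Ici.mpr (le_max_right _ _))
  have hfseqeq : ∀ n : ℕ, ∀ y x : ℝ, -(n:ℝ) ≤ y → -(n:ℝ) ≤ x →
      fseq n x = fseq n y + ∫ t in y..x, G t (fseq n t) := by
    intro n y x hy hx
    have e1 : fseq n x = sol n x := by rw [hfseq]; simp only []; rw [max_eq_left hx]
    have e2 : fseq n y = sol n y := by rw [hfseq]; simp only []; rw [max_eq_left hy]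
    have hIab : IntervalIntegrable (fun t => G t (sol n t)) volume (-(n:ℝ)) y := by
      apply ContinuousOn.intervalIntegrable
      apply (hψcont n).mono
      rw [uIcc_of_le hy]
      exact Icc_subset_Ici_self
    have hIbc : IntervalIntegrable (fun t => G t (sol n t)) volume y x := by
      apply ContinuousOn.intervalIntegrable
      apply (hψcont n).mono
      intro t ht
      rcases le_total y x with h' | h'
      · rw [uIcc_of_le h'] at ht; exact le_trans hy ht.1
      · rw [uIcc_of_ge h'] at ht; exact le_trans hx ht.1
    have h3 : sol n x = sol n y + ∫ t in y..x, G t (sol n t) := by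
      rw [hsolEq n x hx, hsolEq n y hy]
      rw [add_assoc]
      congr 1
      exact (intervalIntegral.integral_add_adjacent_intervals hIab hIbc).symm
    rw [e1, e2, h3]
    congr 1
    apply intervalIntegral.integral_congr
    intro t ht
    have htn : -(n:ℝ) ≤ t := by
      rcases le_total y x with h' | h'
      · rw [uIcc_of_le h'] at ht; exact le_trans hy ht.1
      · rw [uIcc_of_ge h'] at ht; exact le_trans hx ht.1
    simp only [hfseq]
    rw [max_eq_left htn]
  have hevle : ∀ y : ℝ, ∀ᶠ n : ℕ in U, -(n:ℝ) ≤ y := by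
    intro y
    apply Eventually.filter_mono hUle
    filter_upwards [(tendsto_natCast_atTop_atTop (R := ℝ)).eventually_ge_atTop (-y)] with n hn
    linarith
  have hex2 : ∀ x : ℝ, ∃ c, Tendsto (fun n => fseq n x) U (𝓝 c) := by
    intro x
    obtain ⟨c, _, hc⟩ := ultraLim UU (fun n => fseq n x) M (fun n => hfseqbd n x)
    exact ⟨c, hc⟩
  choose f hfl using hex2
  have hstrip : ∀ x, f₁ x ≤ f x ∧ f x ≤ f₂ x := by
    intro x
    constructor
    · apply ge_of_tendsto (hfl x)
      filter_upwards [hevle x] with n hn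
      have : fseq n x = sol n x := by simp only [hfseq]; rw [max_eq_left hn]
      rw [this]
      exact hlower n x hn
    · apply le_of_tendsto (hfl x)
      filter_upwards [hevle x] with n hn
      have : fseq n x = sol n x := by simp only [hfseq]; rw [max_eq_left hn]
      rw [this]
      exact hupper n x hn
  have hfbdM : ∀ x, |f x| ≤ M :=
    fun x => le_of_tendsto (hfl x).abs (Eventually.of_forall fun n => hfseqbd n x)
  -- limit equation
  have heqf : ∀ y x : ℝ, f x = f y + ∫ t in y..x, G t (f t) := by
    intro y x
    set A' := min y x with hA'
    set B' := max y x with hB'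
    have hA'B' : A' ≤ B' := min_le_max
    obtain ⟨C, hC0, hCbd⟩ := hbound A' B'
    have hmemy : y ∈ Icc A' B' := ⟨min_le_left _ _, le_max_left _ _⟩
    have hmemx : x ∈ Icc A' B' := ⟨min_le_right _ _, le_max_right _ _⟩
    have hlip2 : ∀ᶠ n in U, ∀ u ∈ Icc A' B', ∀ v ∈ Icc A' B',
        |fseq n u - fseq n v| ≤ C * |u - v| := by
      filter_upwards [hevle A'] with n hn
      intro u hu v hv
      have h4 := hfseqeq n v u (le_trans hn hv.1) (le_trans hn hu.1)
      rw [h4, add_sub_cancel_left, ← Real.norm_eq_abs (∫ t in v..u, G t (fseq n t))]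
      apply intervalIntegral.norm_integral_le_of_norm_le_const
      intro t ht
      have ht' : t ∈ Icc A' B' := by
        have h5 := Set.uIoc_subset_uIcc ht
        rw [uIcc_comm] at h5
        exact (uIcc_subset_Icc hu hv) h5
      exact hCbd t ht' _
    have hunif2 : TendstoUniformlyOn fseq f U (Icc A' B') :=
      unifOfPointwise hC0 hlip2 (fun u _ => hfl u)
    have hflip2 : ∀ u ∈ Icc A' B', ∀ v ∈ Icc A' B', |f u - f v| ≤ C * |u - v| := by
      intro u hu v hv
      have ht : Tendsto (fun n => |fseq n u - fseq n v|) U (𝓝 |f u - f v|) :=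
        ((hfl u).sub (hfl v)).abs
      exact le_of_tendsto ht (hlip2.mono fun n hn => hn u hu v hv)
    have hfc2 : ContinuousOn f (Icc A' B') := by
      have hL : LipschitzOnWith (Real.toNNReal C) f (Icc A' B') := by
        apply LipschitzOnWith.of_dist_le_mul
        intro u hu v hv
        rw [Real.dist_eq, Real.dist_eq, Real.coe_toNNReal C hC0]
        exact hflip2 u hu v hv
      exact hL.continuousOn
    have hbd2 : ∀ᶠ n in U, ∀ t ∈ Icc A' B', |fseq n t| ≤ M :=
      Eventually.of_forall fun n t _ => hfseqbd n t
    have hfbd2 : ∀ t ∈ Icc A' B', |f t| ≤ M := fun t _ => hfbdM t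
    have hcont2 : ∀ᶠ n in U, ContinuousOn (fseq n) (Icc A' B') :=
      Eventually.of_forall fun n => (hfseqcont n).continuousOn
    have hintAB := intConv hGcont hA'B' hM0 hbd2 hfbd2 hcont2 hfc2 hunif2
    have hintyx : Tendsto (fun n => ∫ t in y..x, G t (fseq n t)) U
        (𝓝 (∫ t in y..x, G t (f t))) := by
      rcases le_total y x with h' | h'
      · have hAy : A' = y := min_eq_left h'
        have hBx : B' = x := max_eq_right h'
        rw [hAy, hBx] at hintAB
        exact hintAB
      · have hAx : A' = x := min_eq_right h'
        have hBy : B' = y := max_eq_left h'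
        rw [hAx, hBy] at hintAB
        have := hintAB.neg
        simp only [← intervalIntegral.integral_symm] at this
        exact this
    have hR : Tendsto (fun n => fseq n y + ∫ t in y..x, G t (fseq n t)) U
        (𝓝 (f y + ∫ t in y..x, G t (f t))) := (hfl y).add hintyx
    have hL : Tendsto (fun n => fseq n x) U (𝓝 (f y + ∫ t in y..x, G t (f t))) := by
      apply hR.congr'
      filter_upwards [hevle y, hevle x] with n hny hnx
      exact (hfseqeq n y x hny hnx).symm
    exact tendsto_nhds_unique (hfl x) hL
  -- continuity of f
  have hfc : Continuous f := by
    rw [continuous_iff_continuousAt]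
    intro x
    obtain ⟨C, hC0, hCbd⟩ := hbound (x-1) (x+1)
    have hflocal : ∀ u ∈ Icc (x-1) (x+1), ∀ v ∈ Icc (x-1) (x+1),
        |f u - f v| ≤ C * |u - v| := by
      intro u hu v hv
      have h4 := heqf v u
      rw [h4, add_sub_cancel_left, ← Real.norm_eq_abs (∫ t in v..u, G t (f t))]
      apply intervalIntegral.norm_integral_le_of_norm_le_const
      intro t ht
      have ht' : t ∈ Icc (x-1) (x+1) := by
        have h5 := Set.uIoc_subset_uIcc ht
        rw [uIcc_comm] at h5
        exact (uIcc_subset_Icc hu hv) h5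
      exact hCbd t ht' _
    have hL : LipschitzOnWith (Real.toNNReal C) f (Icc (x-1) (x+1)) := by
      apply LipschitzOnWith.of_dist_le_mul
      intro u hu v hv
      rw [Real.dist_eq, Real.dist_eq, Real.coe_toNNReal C hC0]
      exact hflocal u hu v hv
    apply hL.continuousOn.continuousAt
    exact Icc_mem_nhds (by linarith) (by linarith)
  have hψf : Continuous fun t => G t (f t) :=
    hGcont.comp (continuous_id.prodMk hfc)
  have hderf : ∀ x, HasDerivAt f (G x (f x)) x := by
    intro x
    have heq0 : f = fun u => f 0 + ∫ t in (0:ℝ)..u, G t (f t) := funext fun u => heqf 0 u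
    have hD : HasDerivAt (fun u => f 0 + ∫ t in (0:ℝ)..u, G t (f t)) (G x (f x)) x := by
      apply HasDerivAt.const_add
      exact intervalIntegral.integral_hasDerivAt_right (hψf.intervalIntegrable _ _)
        hψf.stronglyMeasurable.stronglyMeasurableAtFilter hψf.continuousAt
    exact hD.congr_of_eventuallyEq (Eventually.of_forall fun u => heqf 0 u)
  have hGf : ∀ x, G x (f x) = (lam - H (f x) x) / a x := by
    intro x
    rw [hGdef]
    simp only []
    rw [hclamp_id x (f x) (hstrip x).1 (hstrip x).2]
  refine ⟨f, ?_, ?_, hstrip⟩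
  · rw [contDiff_one_iff_deriv]
    refine ⟨fun x => (hderf x).differentiableAt, ?_⟩
    have hdf : deriv f = fun x => G x (f x) := funext fun x => (hderf x).deriv
    rw [hdf]
    exact hψf
  · intro x
    rw [(hderf x).deriv, hGf x, ← mul_div_assoc, mul_div_cancel_left₀ _ (ne_of_gt (ha_pos x))]
    ring


end AuxiliaryODE

/-- The set `S^lam(f₁,f₂)` of C¹ solutions of `a f' + H(f,x) = lam`
sandwiched between `f₁` and `f₂`. -/
def Ssol (a : ℝ → ℝ) (H : ℝ → ℝ → ℝ) (lam : ℝ) (f₁ f₂ : ℝ → ℝ) : Set (ℝ → ℝ) :=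
  {f | ContDiff ℝ 1 f ∧ (∀ x, a x * deriv f x + H (f x) x = lam) ∧
       ∀ x, f₁ x ≤ f x ∧ f x ≤ f₂ x}

theorem exists_solution_between_lower_and_upper
    (a : ℝ → ℝ) (H : ℝ → ℝ → ℝ)
    (ha_cont : Continuous a) (ha_pos : ∀ x, 0 < a x) (ha_le_one : ∀ x, a x ≤ 1)
    (hH_cont : Continuous fun q : ℝ × ℝ => H q.1 q.2)
    (lam : ℝ) (f₁ f₂ : ℝ → ℝ)
    (hb₁ : ∃ M, ∀ x, |f₁ x| ≤ M) (hb₂ : ∃ M, ∀ x, |f₂ x| ≤ M)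
    (hc₁ : ContDiff ℝ 1 f₁) (hc₂ : ContDiff ℝ 1 f₂)
    (hlt : ∀ x, f₁ x < f₂ x)
    (hcase :
      (∀ x, a x * deriv f₁ x + H (f₁ x) x < lam ∧ lam < a x * deriv f₂ x + H (f₂ x) x) ∨
      (∀ x, lam < a x * deriv f₁ x + H (f₁ x) x ∧ a x * deriv f₂ x + H (f₂ x) x < lam)) :
    (Ssol a H lam f₁ f₂).Nonempty := by
  obtain ⟨M₁, hM₁⟩ := hb₁
  obtain ⟨M₂, hM₂⟩ := hb₂
  set M := max M₁ M₂ with hM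
  have hM₁' : ∀ x, |f₁ x| ≤ M := fun x => le_trans (hM₁ x) (le_max_left _ _)
  have hM₂' : ∀ x, |f₂ x| ≤ M := fun x => le_trans (hM₂ x) (le_max_right _ _)
  have hd₁ : Differentiable ℝ f₁ := hc₁.differentiable one_ne_zero
  have hd₂ : Differentiable ℝ f₂ := hc₂.differentiable one_ne_zero
  rcases hcase with hcase | hcase
  · obtain ⟨f, h1, h2, h3⟩ := mainCase a H ha_cont ha_pos hH_cont lam f₁ f₂ M hM₁' hM₂'
      hd₁ hd₂ hlt (fun x => (hcase x).1) (fun x => (hcase x).2)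
    exact ⟨f, h1, h2, h3⟩
  · -- reflect x ↦ -x
    set ar : ℝ → ℝ := fun x => a (-x) with har
    set Hr : ℝ → ℝ → ℝ := fun p x => -(H p (-x)) with hHr
    set f₁r : ℝ → ℝ := fun x => f₁ (-x) with hf₁r
    set f₂r : ℝ → ℝ := fun x => f₂ (-x) with hf₂r
    have har_cont : Continuous ar := ha_cont.comp continuous_neg
    have har_pos : ∀ x, 0 < ar x := fun x => ha_pos (-x)
    have hHr_cont : Continuous fun q : ℝ × ℝ => Hr q.1 q.2 :=
      (hH_cont.comp (continuous_fst.prodMk continuous_snd.neg)).neg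
    have hMr₁ : ∀ x, |f₁r x| ≤ M := fun x => hM₁' (-x)
    have hMr₂ : ∀ x, |f₂r x| ≤ M := fun x => hM₂' (-x)
    have hdr₁ : Differentiable ℝ f₁r := hd₁.comp differentiable_neg
    have hdr₂ : Differentiable ℝ f₂r := hd₂.comp differentiable_neg
    have hltr : ∀ x, f₁r x < f₂r x := fun x => hlt (-x)
    have hder₁ : ∀ x, deriv f₁r x = -deriv f₁ (-x) := fun x => deriv_comp_neg f₁ x
    have hder₂ : ∀ x, deriv f₂r x = -deriv f₂ (-x) := fun x => deriv_comp_neg f₂ x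
    have h₁r : ∀ x, ar x * deriv f₁r x + Hr (f₁r x) x < -lam := by
      intro x
      have := (hcase (-x)).1
      rw [hHr, hf₁r]
      simp only []
      rw [hder₁ x]
      have harx : ar x = a (-x) := rfl
      rw [harx]
      nlinarith [this]
    have h₂r : ∀ x, -lam < ar x * deriv f₂r x + Hr (f₂r x) x := by
      intro x
      have := (hcase (-x)).2
      rw [hHr, hf₂r]
      simp only []
      rw [hder₂ x]
      have harx : ar x = a (-x) := rfl
      rw [harx]
      nlinarith [this]
    obtain ⟨g, hg1, hg2, hg3⟩ := mainCase ar Hr har_cont har_pos hHr_cont (-lam)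
      f₁r f₂r M hMr₁ hMr₂ hdr₁ hdr₂ hltr h₁r h₂r
    refine ⟨fun x => g (-x), ?_, ?_, ?_⟩
    · exact hg1.comp (contDiff_id.neg)
    · intro x
      have hgx := hg2 (-x)
      have hdg : deriv (fun x => g (-x)) x = -deriv g (-x) := deriv_comp_neg g x
      rw [hdg]
      have e1 : ar (-x) = a x := by rw [har]; simp
      have e2 : Hr (g (-x)) (-x) = -(H (g (-x)) x) := by rw [hHr]; simp
      rw [e1, e2] at hgx
      nlinarith [hgx]
    · intro x
      have := hg3 (-x)
      have e1 : f₁r (-x) = f₁ x := by rw [hf₁r]; simp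
      have e2 : f₂r (-x) = f₂ x := by rw [hf₂r]; simp
      rw [e1, e2] at this
      exact this
end

section
/- For every λ ∈ ℝ and bounded f₁, f₂ : ℝ → ℝ with f₁ < f₂ pointwise, the set S^λ(f₁,f₂) is compact in the topology of locally uniform convergence (every sequence in S^λ(f₁,f₂) has a subsequence converging locally uniformly on ℝ to an element of S^λ(f₁,f₂)). Moreover, if S^λ(f₁,f₂) is nonempty, then the function f̄ : ℝ → ℝ defined by f̄(x) = sup{ f(x) : f ∈ S^λ(f₁,f₂) } belongs to S^λ(f₁,f₂). -/
open MeasureTheory Filter Set Topology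

noncomputable def Fode (a : ℝ → ℝ) (H : ℝ → ℝ → ℝ) (lam : ℝ) (p x : ℝ) : ℝ :=
  (lam - H p x) / a x

section Aux

variable {a : ℝ → ℝ} {H : ℝ → ℝ → ℝ} {lam : ℝ} {f₁ f₂ : ℝ → ℝ}

lemma contF (ha_cont : Continuous a) (ha_pos : ∀ x, 0 < a x)
    (hH_cont : Continuous fun q : ℝ × ℝ => H q.1 q.2) :
    Continuous fun q : ℝ × ℝ => Fode a H lam q.1 q.2 :=
  (continuous_const.sub hH_cont).div (ha_cont.comp continuous_snd)
    (fun q => (ha_pos q.2).ne')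

lemma contF1 (ha_cont : Continuous a) (ha_pos : ∀ x, 0 < a x)
    (hH_cont : Continuous fun q : ℝ × ℝ => H q.1 q.2) {f : ℝ → ℝ} (hf : Continuous f) :
    Continuous fun x => Fode a H lam (f x) x :=
  (contF ha_cont ha_pos hH_cont).comp (hf.prodMk continuous_id)

lemma hasDeriv_of_mem (ha_pos : ∀ x, 0 < a x) {f : ℝ → ℝ}
    (hf : f ∈ Ssol a H lam f₁ f₂) (x : ℝ) :
    HasDerivAt f (Fode a H lam (f x) x) x := by
  have hd : DifferentiableAt ℝ f x := (hf.1.differentiable one_ne_zero) x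
  have h := hd.hasDerivAt
  have he : deriv f x = Fode a H lam (f x) x := by
    have h2 := hf.2.1 x
    rw [Fode, eq_div_iff (ha_pos x).ne']
    nlinarith [h2]
  rwa [he] at h

lemma mem_of (ha_cont : Continuous a) (ha_pos : ∀ x, 0 < a x)
    (hH_cont : Continuous fun q : ℝ × ℝ => H q.1 q.2) {f : ℝ → ℝ}
    (hbd : ∀ x, f₁ x ≤ f x ∧ f x ≤ f₂ x)
    (hd : ∀ x, HasDerivAt f (Fode a H lam (f x) x) x) :
    f ∈ Ssol a H lam f₁ f₂ := by
  have hdiff : Differentiable ℝ f := fun x => (hd x).differentiableAt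
  have hderiv : deriv f = fun x => Fode a H lam (f x) x := funext fun x => (hd x).deriv
  refine ⟨contDiff_one_iff_deriv.2 ⟨hdiff, ?_⟩, ?_, hbd⟩
  · rw [hderiv]
    exact contF1 ha_cont ha_pos hH_cont hdiff.continuous
  · intro x
    rw [hderiv]
    have := (ha_pos x).ne'
    simp only [Fode]
    field_simp
    ring
/-- Bound on `Fode` on a compact rectangle. -/
lemma fode_bound (ha_cont : Continuous a) (ha_pos : ∀ x, 0 < a x)
    (hH_cont : Continuous fun q : ℝ × ℝ => H q.1 q.2) (M R : ℝ) :
    ∃ C : ℝ, 0 ≤ C ∧ ∀ p x : ℝ, |p| ≤ M → |x| ≤ R → |Fode a H lam p x| ≤ C := by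
  obtain ⟨C, hC⟩ := ((isCompact_Icc (a := (-M : ℝ)) (b := M)).prod (isCompact_Icc (a := (-R : ℝ)) (b := R))).exists_bound_of_continuousOn
    (contF ha_cont ha_pos hH_cont (lam := lam)).continuousOn
  refine ⟨max C 0, le_max_right _ _, fun p x hp hx => ?_⟩
  have := hC (p, x) ⟨abs_le.1 hp, abs_le.1 hx⟩
  simp only [Real.norm_eq_abs] at this
  exact this.trans (le_max_left _ _)


/-- Common Lipschitz constant for solutions on `Icc (-R) R`. -/
lemma lip_of_mem (ha_cont : Continuous a) (ha_pos : ∀ x, 0 < a x)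
    (hH_cont : Continuous fun q : ℝ × ℝ => H q.1 q.2) {M : ℝ}
    (hM : ∀ f ∈ Ssol a H lam f₁ f₂, ∀ x, |f x| ≤ M) (R : ℝ) :
    ∃ C : NNReal, ∀ f ∈ Ssol a H lam f₁ f₂, LipschitzOnWith C f (Icc (-R) R) := by
  obtain ⟨C, hC0, hC⟩ := fode_bound (lam := lam) ha_cont ha_pos hH_cont M R
  refine ⟨⟨C, hC0⟩, fun f hf => ?_⟩
  apply (convex_Icc _ _).lipschitzOnWith_of_nnnorm_deriv_le
    (fun x _ => (hasDeriv_of_mem ha_pos hf x).differentiableAt)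
  intro x hx
  have hd : deriv f x = Fode a H lam (f x) x := (hasDeriv_of_mem ha_pos hf x).deriv
  change ((‖deriv f x‖₊ : NNReal) : ℝ) ≤ C
  rw [coe_nnnorm, Real.norm_eq_abs, hd]
  exact hC _ _ (hM f hf x) (abs_le.2 hx)

/-- Sequential Arzelà–Ascoli on a fixed interval. -/
lemma ascoli_seq (R M : ℝ) (C : NNReal) (v : ℕ → ℝ → ℝ) (hc : ∀ n, Continuous (v n))
    (hM : ∀ n x, |v n x| ≤ M)
    (hlip : ∀ n, LipschitzOnWith C (v n) (Icc (-R) R)) :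
    ∃ φ : ℕ → ℕ, StrictMono φ ∧ ∃ g : ℝ → ℝ,
      TendstoUniformlyOn (fun n => v (φ n)) g atTop (Icc (-R) R) := by
  set α := ↥(Icc (-R : ℝ) R)
  haveI : CompactSpace α := isCompact_iff_compactSpace.1 isCompact_Icc
  set Vb : ℕ → BoundedContinuousFunction α ℝ := fun n =>
    BoundedContinuousFunction.mkOfCompact ⟨fun x => v n ↑x, (hc n).comp continuous_subtype_val⟩
    with hVb
  set A : Set (BoundedContinuousFunction α ℝ) := Set.range Vb with hA
  have hcl : IsCompact (closure A) := by
    apply BoundedContinuousFunction.arzela_ascoli (Icc (-M) M) isCompact_Icc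
    · rintro f x ⟨n, rfl⟩
      exact abs_le.1 (hM n x)
    · apply Metric.equicontinuous_of_continuity_modulus (fun t => (C : ℝ) * t)
      · exact (continuous_mul_left (C : ℝ)).tendsto' 0 0 (by simp)
      · rintro x y ⟨f, n, rfl⟩
        have := (hlip n).dist_le_mul x.1 x.2 y.1 y.2
        simp [hVb]
        exact this
  obtain ⟨G, hGA, φ, hφ, htend⟩ := hcl.isSeqCompact (fun n => subset_closure ⟨n, rfl⟩)
  refine ⟨φ, hφ, fun x => if h : x ∈ Icc (-R : ℝ) R then G ⟨x, h⟩ else 0, ?_⟩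
  rw [tendstoUniformlyOn_iff_tendstoUniformly_comp_coe]
  have h2 := BoundedContinuousFunction.tendsto_iff_tendstoUniformly.1 htend
  convert h2 using 1
  funext x
  · rfl
  funext x
  exact dif_pos x.2

/-- Diagonal extraction. -/
lemma diagonal (u : ℕ → ℝ → ℝ)
    (E : ∀ (R : ℝ) (s : ℕ → ℕ), StrictMono s → ∃ t : ℕ → ℕ, StrictMono t ∧
      ∃ g : ℝ → ℝ, TendstoUniformlyOn (fun n => u (s (t n))) g atTop (Icc (-R) R)) :
    ∃ φ : ℕ → ℕ, StrictMono φ ∧ ∃ g : ℝ → ℝ,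
      ∀ R : ℝ, TendstoUniformlyOn (fun n => u (φ n)) g atTop (Icc (-R) R) := by
  choose t ht g hg using E
  let T : ℕ → {s : ℕ → ℕ // StrictMono s} := fun k => Nat.rec ⟨id, strictMono_id⟩
    (fun k p => ⟨p.1 ∘ t k p.1 p.2, p.2.comp (ht k p.1 p.2)⟩) k
  set gk : ℕ → ℝ → ℝ := fun k => g k (T k).1 (T k).2 with hgk
  have conv : ∀ k : ℕ, TendstoUniformlyOn (fun n => u ((T (k+1)).1 n)) (gk k)
      atTop (Icc (-(k : ℝ)) k) := fun k => hg k (T k).1 (T k).2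
  have comp : ∀ k l : ℕ, k ≤ l → ∃ r : ℕ → ℕ, StrictMono r ∧ ∀ n, (T l).1 n = (T k).1 (r n) := by
    intro k l hkl
    induction l, hkl using Nat.le_induction with
    | base => exact ⟨id, strictMono_id, fun n => rfl⟩
    | succ l hkl ih =>
      obtain ⟨r, hr, hrn⟩ := ih
      exact ⟨r ∘ t l (T l).1 (T l).2, hr.comp (ht l (T l).1 (T l).2), fun n => hrn _⟩
  set d : ℕ → ℕ := fun n => (T (n+1)).1 n with hdd
  have hd : StrictMono d := by
    apply strictMono_nat_of_lt_succ
    intro n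
    calc d n = (T (n+1)).1 n := rfl
    _ < (T (n+1)).1 (n+1) := (T (n+1)).2 (Nat.lt_succ_self n)
    _ ≤ (T (n+1)).1 (t ((n+1 : ℕ)) (T (n+1)).1 (T (n+1)).2 (n+1)) :=
        (T (n+1)).2.monotone (ht ((n+1 : ℕ)) (T (n+1)).1 (T (n+1)).2).le_apply
    _ = d (n+1) := rfl
  have huk : ∀ k : ℕ, TendstoUniformlyOn (fun n => u (d n)) (gk k) atTop (Icc (-(k : ℝ)) k) := by
    intro k
    rw [Metric.tendstoUniformlyOn_iff]
    intro ε hε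
    obtain ⟨N, hN⟩ := eventually_atTop.1 ((Metric.tendstoUniformlyOn_iff.1 (conv k)) ε hε)
    refine eventually_atTop.2 ⟨max N k, fun n hn => ?_⟩
    have hkn : k ≤ n := le_trans (le_max_right _ _) hn
    obtain ⟨r, hr, hrn⟩ := comp (k+1) (n+1) (Nat.succ_le_succ hkn)
    have hdn : d n = (T (k+1)).1 (r n) := hrn n
    intro x hx
    have := hN (r n) (le_trans (le_trans (le_max_left _ _) hn) hr.le_apply) x hx
    rwa [hdn]
  have hmem : ∀ x : ℝ, x ∈ Icc (-(⌈|x|⌉₊ : ℝ)) (⌈|x|⌉₊ : ℝ) := by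
    intro x
    have := Nat.le_ceil |x|
    constructor <;> cases abs_le.1 this <;> linarith [abs_nonneg x, le_abs_self x,
      neg_abs_le x]
  refine ⟨d, hd, fun x => gk ⌈|x|⌉₊ x, fun R => ?_⟩
  set k := ⌈max R 0⌉₊ with hk
  have hsub : Icc (-R) R ⊆ Icc (-(k : ℝ)) (k : ℝ) := by
    apply Icc_subset_Icc <;>
      [skip; skip] <;>
      have h1 : max R 0 ≤ (k : ℝ) := Nat.le_ceil _
    · have := le_max_left R 0; linarith
    · have := le_max_left R 0; linarith
  apply ((huk k).mono hsub).congr_right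
  intro x hx
  exact tendsto_nhds_unique ((huk k).tendsto_at (hsub hx)) ((huk ⌈|x|⌉₊).tendsto_at (hmem x))

lemma limit_mem (ha_cont : Continuous a) (ha_pos : ∀ x, 0 < a x)
    (hH_cont : Continuous fun q : ℝ × ℝ => H q.1 q.2) {M : ℝ}
    (hM : ∀ f ∈ Ssol a H lam f₁ f₂, ∀ x, |f x| ≤ M)
    (v : ℕ → ℝ → ℝ) (hv : ∀ n, v n ∈ Ssol a H lam f₁ f₂) (f : ℝ → ℝ)
    (hconv : ∀ R : ℝ, TendstoUniformlyOn v f atTop (Icc (-R) R)) :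
    f ∈ Ssol a H lam f₁ f₂ ∧ TendstoLocallyUniformly v f atTop := by
  have hpt : ∀ x, Tendsto (fun n => v n x) atTop (𝓝 (f x)) := fun x =>
    (hconv |x|).tendsto_at ⟨neg_abs_le x, le_abs_self x⟩
  have htlu : TendstoLocallyUniformly v f atTop := by
    rw [tendstoLocallyUniformly_iff_forall_isCompact]
    intro K hK
    obtain ⟨R, hR⟩ := hK.isBounded.subset_closedBall 0
    exact (hconv R).mono (by rwa [Real.closedBall_eq_Icc, zero_sub, zero_add] at hR)
  have hfc : Continuous f :=
    htlu.continuous (Eventually.of_forall fun n => (hv n).1.continuous).frequently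
  have hbd : ∀ x, f₁ x ≤ f x ∧ f x ≤ f₂ x := fun x =>
    ⟨ge_of_tendsto' (hpt x) (fun n => ((hv n).2.2 x).1),
     le_of_tendsto' (hpt x) (fun n => ((hv n).2.2 x).2)⟩
  have hG : ∀ (n : ℕ) (x : ℝ), v n x = v n 0 + ∫ t in (0:ℝ)..x, Fode a H lam (v n t) t := by
    intro n x
    have hder := hasDeriv_of_mem (f₁ := f₁) (f₂ := f₂) ha_pos (hv n)
    have hcont : Continuous fun t => Fode a H lam (v n t) t :=
      contF1 ha_cont ha_pos hH_cont (hv n).1.continuous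
    have h := intervalIntegral.integral_eq_sub_of_hasDerivAt (f := v n)
      (fun t _ => hder t) (hcont.intervalIntegrable 0 x)
    linarith [h]
  have hkey : ∀ x, f x = f 0 + ∫ t in (0:ℝ)..x, Fode a H lam (f t) t := by
    intro x
    obtain ⟨C, hC0, hC⟩ := fode_bound (lam := lam) ha_cont ha_pos hH_cont M |x|
    have hint : Tendsto (fun n => ∫ t in (0:ℝ)..x, Fode a H lam (v n t) t) atTop
        (𝓝 (∫ t in (0:ℝ)..x, Fode a H lam (f t) t)) := by
      apply intervalIntegral.tendsto_integral_filter_of_dominated_convergence (fun _ => C)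
      · exact Eventually.of_forall fun n =>
          (contF1 ha_cont ha_pos hH_cont (hv n).1.continuous).aestronglyMeasurable
      · refine Eventually.of_forall fun n => ae_of_all _ fun t ht => ?_
        rw [Set.mem_uIoc] at ht
        have htx : |t| ≤ |x| := by
          have h1 := neg_abs_le x; have h2 := le_abs_self x
          rcases ht with ⟨h3, h4⟩ | ⟨h3, h4⟩ <;> rw [abs_le] <;> constructor <;> linarith
        simpa [Real.norm_eq_abs] using hC _ _ (hM _ (hv n) t) htx
      · exact intervalIntegrable_const
      · refine ae_of_all _ fun t _ => ?_
        have hp : Tendsto (fun n => (v n t, t)) atTop (𝓝 (f t, t)) :=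
          (hpt t).prodMk_nhds tendsto_const_nhds
        exact ((contF ha_cont ha_pos hH_cont (lam := lam)).tendsto (f t, t)).comp hp
    have h2 := (hpt 0).add hint
    exact tendsto_nhds_unique (hpt x) (h2.congr fun n => (hG n x).symm)
  have hGc : Continuous fun t => Fode a H lam (f t) t := contF1 ha_cont ha_pos hH_cont hfc
  have hd : ∀ x, HasDerivAt f (Fode a H lam (f x) x) x := by
    intro x
    have h := (intervalIntegral.integral_hasDerivAt_right (hGc.intervalIntegrable 0 x)
      (hGc.stronglyMeasurableAtFilter _ _) hGc.continuousAt).const_add (f 0)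
    exact h.congr_of_eventuallyEq (Eventually.of_forall fun y => hkey y)
  exact ⟨mem_of ha_cont ha_pos hH_cont hbd hd, htlu⟩

lemma max_mem (ha_cont : Continuous a) (ha_pos : ∀ x, 0 < a x)
    (hH_cont : Continuous fun q : ℝ × ℝ => H q.1 q.2) {f g : ℝ → ℝ}
    (hf : f ∈ Ssol a H lam f₁ f₂) (hg : g ∈ Ssol a H lam f₁ f₂) :
    (fun x => max (f x) (g x)) ∈ Ssol a H lam f₁ f₂ := by
  set m : ℝ → ℝ := fun x => max (f x) (g x) with hm
  have hbd : ∀ x, f₁ x ≤ m x ∧ m x ≤ f₂ x := fun x =>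
    ⟨le_max_of_le_left ((hf.2.2 x).1), max_le (hf.2.2 x).2 (hg.2.2 x).2⟩
  refine mem_of ha_cont ha_pos hH_cont hbd fun x => ?_
  have hdf := hasDeriv_of_mem (f₁ := f₁) (f₂ := f₂) ha_pos hf x
  have hdg := hasDeriv_of_mem (f₁ := f₁) (f₂ := f₂) ha_pos hg x
  rcases lt_trichotomy (f x) (g x) with hlt | heq | hgt
  · have hev : ∀ᶠ y in 𝓝 x, f y < g y :=
      (hf.1.continuous.continuousAt (x := x)).eventually_lt
        (hg.1.continuous.continuousAt) hlt
    have hmg : m =ᶠ[𝓝 x] g := hev.mono fun y hy => max_eq_right hy.le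
    have : m x = g x := max_eq_right hlt.le
    rw [hm] at this ⊢
    rw [this]
    exact hdg.congr_of_eventuallyEq hmg
  · have hd : Fode a H lam (g x) x = Fode a H lam (f x) x := by rw [heq]
    have hmx : m x = f x := by simp [hm, heq]
    rw [hm] at hmx ⊢
    rw [hmx]
    rw [hasDerivAt_iff_isLittleO] at hdf hdg ⊢
    rw [Asymptotics.isLittleO_iff] at hdf hdg ⊢
    intro c hc
    filter_upwards [hdf hc, hdg hc] with y h1 h2
    have hsub : m y - m x - (y - x) • Fode a H lam (f x) x =
        max (f y - f x - (y - x) • Fode a H lam (f x) x)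
            (g y - g x - (y - x) • Fode a H lam (g x) x) := by
      simp only [hm, smul_eq_mul, hd, ← heq, max_self]
      rw [max_sub_sub_right, max_sub_sub_right]
    rw [hsub]
    rw [Real.norm_eq_abs] at *
    calc |max (f y - f x - (y - x) • Fode a H lam (f x) x)
            (g y - g x - (y - x) • Fode a H lam (g x) x)|
        ≤ max |f y - f x - (y - x) • Fode a H lam (f x) x|
            |g y - g x - (y - x) • Fode a H lam (g x) x| := abs_max_le_max_abs_abs
      _ ≤ c * |y - x| := max_le h1 h2
  · have hev : ∀ᶠ y in 𝓝 x, g y < f y :=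
      (hg.1.continuous.continuousAt (x := x)).eventually_lt
        (hf.1.continuous.continuousAt) hgt
    have hmf : m =ᶠ[𝓝 x] f := hev.mono fun y hy => max_eq_left hy.le
    have : m x = f x := max_eq_left hgt.le
    rw [hm] at this ⊢
    rw [this]
    exact hdf.congr_of_eventuallyEq hmf

theorem Ssol_compact_and_sup_mem
    (a : ℝ → ℝ) (H : ℝ → ℝ → ℝ)
    (ha_cont : Continuous a) (ha_pos : ∀ x, 0 < a x) (ha_le_one : ∀ x, a x ≤ 1)
    (hH_cont : Continuous fun q : ℝ × ℝ => H q.1 q.2)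
    (lam : ℝ) (f₁ f₂ : ℝ → ℝ)
    (hb₁ : ∃ M, ∀ x, |f₁ x| ≤ M) (hb₂ : ∃ M, ∀ x, |f₂ x| ≤ M)
    (hlt : ∀ x, f₁ x < f₂ x) :
    (∀ u : ℕ → ℝ → ℝ, (∀ n, u n ∈ Ssol a H lam f₁ f₂) →
      ∃ φ : ℕ → ℕ, StrictMono φ ∧ ∃ f ∈ Ssol a H lam f₁ f₂,
        TendstoLocallyUniformly (fun n => u (φ n)) f atTop) ∧
    ((Ssol a H lam f₁ f₂).Nonempty →
      (fun x => sSup ((fun f : ℝ → ℝ => f x) '' Ssol a H lam f₁ f₂)) ∈ Ssol a H lam f₁ f₂) := by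
  obtain ⟨M₁, hM₁⟩ := hb₁
  obtain ⟨M₂, hM₂⟩ := hb₂
  have hM : ∀ f ∈ Ssol a H lam f₁ f₂, ∀ x, |f x| ≤ max M₁ M₂ := by
    intro f hf x
    have h1 := abs_le.1 (hM₁ x); have h2 := abs_le.1 (hM₂ x)
    have h3 := (hf.2.2 x).1; have h4 := (hf.2.2 x).2
    have h5 := le_max_left M₁ M₂; have h6 := le_max_right M₁ M₂
    rw [abs_le]; constructor <;> linarith [h1.1, h2.2]
  have hcomp : ∀ u : ℕ → ℝ → ℝ, (∀ n, u n ∈ Ssol a H lam f₁ f₂) →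
      ∃ φ : ℕ → ℕ, StrictMono φ ∧ ∃ f ∈ Ssol a H lam f₁ f₂,
        TendstoLocallyUniformly (fun n => u (φ n)) f atTop ∧
        ∀ x, Tendsto (fun n => u (φ n) x) atTop (𝓝 (f x)) := by
    intro u hu
    have E : ∀ (R : ℝ) (s : ℕ → ℕ), StrictMono s → ∃ t : ℕ → ℕ, StrictMono t ∧
        ∃ g : ℝ → ℝ, TendstoUniformlyOn (fun n => u (s (t n))) g atTop (Icc (-R) R) := by
      intro R s _
      obtain ⟨C, hC⟩ := lip_of_mem ha_cont ha_pos hH_cont hM R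
      obtain ⟨φ, hφ, g, hg⟩ := ascoli_seq R (max M₁ M₂) C (fun n => u (s n))
        (fun n => (hu (s n)).1.continuous) (fun n x => hM _ (hu (s n)) x)
        (fun n => hC _ (hu (s n)))
      exact ⟨φ, hφ, g, hg⟩
    obtain ⟨φ, hφ, g, hg⟩ := diagonal u E
    obtain ⟨hmem, htlu⟩ := limit_mem ha_cont ha_pos hH_cont hM
      (fun n => u (φ n)) (fun n => hu (φ n)) g hg
    exact ⟨φ, hφ, g, hmem, htlu, fun x =>
      (hg |x|).tendsto_at ⟨neg_abs_le x, le_abs_self x⟩⟩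
  constructor
  · intro u hu
    obtain ⟨φ, hφ, f, hfS, htlu, _⟩ := hcomp u hu
    exact ⟨φ, hφ, f, hfS, htlu⟩
  intro hne
  set S := Ssol a H lam f₁ f₂ with hSdef
  set fbar : ℝ → ℝ := fun x => sSup ((fun f : ℝ → ℝ => f x) '' S) with hfbar
  have hbdd : ∀ x, BddAbove ((fun f : ℝ → ℝ => f x) '' S) := fun x =>
    ⟨f₂ x, by rintro y ⟨f, hf, rfl⟩; exact (hf.2.2 x).2⟩
  have hnex : ∀ x, ((fun f : ℝ → ℝ => f x) '' S).Nonempty := fun x => hne.image _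
  have hle_bar : ∀ f ∈ S, ∀ x, f x ≤ fbar x := fun f hf x => le_csSup (hbdd x) ⟨f, hf, rfl⟩
  have attain : ∀ x, ∃ f ∈ S, f x = fbar x := by
    intro x
    obtain ⟨w, _, hwt, hwmem⟩ := exists_seq_tendsto_sSup (hnex x) (hbdd x)
    choose v hvS hvx using hwmem
    obtain ⟨φ, hφ, f, hfS, _, hpt⟩ := hcomp v hvS
    refine ⟨f, hfS, ?_⟩
    have h2 : Tendsto (fun n => v (φ n) x) atTop (𝓝 (fbar x)) :=
      (hwt.comp hφ.tendsto_atTop).congr fun n => (hvx (φ n)).symm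
    exact tendsto_nhds_unique (hpt x) h2
  set e : ℕ → ℝ := fun k => (((Denumerable.eqv ℚ).symm k : ℚ) : ℝ) with he
  have hdense : DenseRange e :=
    Rat.denseRange_cast.comp (Denumerable.eqv ℚ).symm.surjective.denseRange Rat.continuous_coe_real
  choose gk hgkS hgkx using fun k => attain (e k)
  set hseq : ℕ → ℝ → ℝ := fun n => Nat.rec (gk 0)
    (fun n p => fun x => max (p x) (gk (n+1) x)) n with hhseq
  have hseqS : ∀ n, hseq n ∈ S := by
    intro n
    induction n with
    | zero => exact hgkS 0
    | succ n ih => exact max_mem ha_cont ha_pos hH_cont ih (hgkS (n+1))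
  have hge : ∀ k n, k ≤ n → ∀ x, gk k x ≤ hseq n x := by
    intro k n hkn
    induction n with
    | zero => intro x; rw [Nat.le_zero.1 hkn]; exact le_rfl
    | succ n ih =>
      intro x
      rcases Nat.lt_or_ge k (n+1) with h | h
      · exact le_trans (ih (Nat.lt_succ_iff.1 h) x) (le_max_left _ _)
      · have : k = n + 1 := le_antisymm hkn h
        rw [this]
        exact le_max_right _ _
  obtain ⟨φ, hφ, F, hFS, _, hFpt⟩ := hcomp hseq hseqS
  have hFe : ∀ k, fbar (e k) ≤ F (e k) := by
    intro k
    have hev : ∀ᶠ n in atTop, gk k (e k) ≤ hseq (φ n) (e k) :=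
      eventually_atTop.2 ⟨k, fun n hn => hge k (φ n) (le_trans hn hφ.le_apply) _⟩
    have := ge_of_tendsto (hFpt (e k)) hev
    rwa [hgkx k] at this
  have hall : ∀ f ∈ S, ∀ x, f x ≤ F x := by
    intro f hf x
    have hcl : IsClosed {y | f y ≤ F y} := isClosed_le hf.1.continuous hFS.1.continuous
    have hsub : range e ⊆ {y | f y ≤ F y} := by
      rintro _ ⟨k, rfl⟩
      exact le_trans (hle_bar f hf _) (hFe k)
    have hx : x ∈ closure (range e) := by rw [hdense.closure_range]; trivial
    exact closure_minimal hsub hcl hx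
  have heqF : fbar = F := funext fun x => le_antisymm
    (csSup_le (hnex x) (by rintro y ⟨f, hf, rfl⟩; exact hall f hf x))
    (hle_bar F hFS x)
  exact heqF ▸ hFS
end Aux
end

section
/- Let λ ∈ ℝ and suppose f : ℝ → ℝ is bounded, C¹, and satisfies a(x)f′(x) + H(f(x),x) ≤ λ for all x ∈ ℝ. Then the set {p ≥ 0 : G_L(p) ≤ λ} is nonempty (equivalently λ ≥ G_L(0)) and |f(x)| ≤ R̄^λ for all x ∈ ℝ. -/
open MeasureTheory Filter Set

/-- Core descent lemma: a bounded differentiable function whose derivative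
is ≤ -ε whenever its value is ≤ c, starting from a value ≤ c, goes to -∞. -/
lemma descend_contra (g : ℝ → ℝ) (hg : ContDiff ℝ 1 g)
    (M : ℝ) (hM : ∀ x, |g x| ≤ M) (ε : ℝ) (hε : 0 < ε) (c x₀ : ℝ)
    (h0 : g x₀ ≤ c) (key : ∀ x, g x ≤ c → deriv g x ≤ -ε) : False := by
  have hdiff : Differentiable ℝ g := hg.differentiable one_ne_zero
  set T : ℝ := 2 * (c + M) / ε + 1 with hT
  have hcM : 0 ≤ c + M := by
    have := hM x₀
    have := abs_le.mp (hM x₀)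
    linarith
  have hTpos : 0 < T := by positivity
  set b : ℝ := x₀ + T with hb
  set B : ℝ → ℝ := fun x => c + ε / 2 * x₀ - ε / 2 * x with hB
  have hB' : ∀ x, HasDerivAt B (-(ε / 2)) x := by
    intro x
    have : HasDerivAt B (0 - ε / 2 * 1) x :=
      (hasDerivAt_const x (c + ε / 2 * x₀)).sub ((hasDerivAt_id x).const_mul (ε / 2))
    simpa using this
  have hle : ∀ ⦃x⦄, x ∈ Icc x₀ b → g x ≤ B x := by
    refine image_le_of_deriv_right_lt_deriv_boundary (f' := deriv g)
      hdiff.continuous.continuousOn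
      (fun x _ => (hdiff x).hasDerivAt.hasDerivWithinAt) ?_ hB' ?_
    · simp [hB, h0]
    · intro x hx hgx
      have hBle : B x ≤ c := by
        have : x₀ ≤ x := hx.1
        have : ε / 2 * x₀ ≤ ε / 2 * x := by nlinarith
        simp [hB]; linarith
      have := key x (hgx ▸ hBle)
      linarith
  have hbmem : b ∈ Icc x₀ b := by constructor <;> nlinarith
  have h1 : g b ≤ B b := hle hbmem
  have h2 : -M ≤ g b := (abs_le.mp (hM b)).1
  have hhalf : ε / 2 * T = c + M + ε / 2 := by
    rw [hT]; field_simp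
  have hbe : ε / 2 * b = ε / 2 * x₀ + ε / 2 * T := by rw [hb]; ring
  simp only [hB] at h1
  linarith

/-- If g satisfies the differential inequality and dips strictly below 0 with
energy above lam, contradiction. -/
lemma sign_contra (a' : ℝ → ℝ) (ha_pos : ∀ x, 0 < a' x) (ha_le_one : ∀ x, a' x ≤ 1)
    (G_L : ℝ → ℝ) (hGL_even : ∀ p, G_L (-p) = G_L p) (hGL_mono : MonotoneOn G_L (Ici 0))
    (lam : ℝ) (g : ℝ → ℝ) (hg : ContDiff ℝ 1 g) (M : ℝ) (hM : ∀ x, |g x| ≤ M)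
    (hineq : ∀ x, a' x * deriv g x + G_L (g x) ≤ lam)
    (x₀ : ℝ) (h0 : g x₀ < 0) (hlam : lam < G_L (g x₀)) : False := by
  set ε : ℝ := G_L (g x₀) - lam with hε
  have hεpos : 0 < ε := by linarith
  refine descend_contra g hg M hM ε hεpos (g x₀) x₀ le_rfl ?_
  intro x hx
  have hGmon : G_L (g x₀) ≤ G_L (g x) := by
    have h1 : (0:ℝ) ≤ -g x₀ := by linarith
    have h2 : -g x₀ ≤ -g x := by linarith
    have := hGL_mono (mem_Ici.mpr h1) (mem_Ici.mpr (le_trans h1 h2)) h2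
    rwa [hGL_even, hGL_even] at this
  have h3 : a' x * deriv g x ≤ -ε := by have := hineq x; linarith
  have hax := ha_pos x
  have hd0 : deriv g x < 0 := by nlinarith
  calc deriv g x = 1 * deriv g x := (one_mul _).symm
    _ ≤ a' x * deriv g x := by nlinarith [ha_le_one x]
    _ ≤ -ε := h3
theorem subsolution_uniform_bound
    (a : ℝ → ℝ) (H : ℝ → ℝ → ℝ)
    (ha_cont : Continuous a) (ha_pos : ∀ x, 0 < a x) (ha_le_one : ∀ x, a x ≤ 1)
    (hH_cont : Continuous fun q : ℝ × ℝ => H q.1 q.2)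
    (G_L : ℝ → ℝ) (hGL_cont : Continuous G_L) (hGL_even : ∀ p, G_L (-p) = G_L p)
    (hGL_mono : MonotoneOn G_L (Ici 0)) (hGL_coercive : Tendsto G_L atTop atTop)
    (hGL_le : ∀ p x, G_L p ≤ H p x)
    (lam : ℝ) (f : ℝ → ℝ)
    (hb : ∃ M, ∀ x, |f x| ≤ M) (hf : ContDiff ℝ 1 f)
    (hineq : ∀ x, a x * deriv f x + H (f x) x ≤ lam) :
    {p : ℝ | 0 ≤ p ∧ G_L p ≤ lam}.Nonempty ∧
    ∀ x, |f x| ≤ sSup {p : ℝ | 0 ≤ p ∧ G_L p ≤ lam} := by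
  obtain ⟨M, hM⟩ := hb
  have hdiff : Differentiable ℝ f := hf.differentiable one_ne_zero
  -- derived scalar inequality
  have hkey : ∀ x, a x * deriv f x + G_L (f x) ≤ lam := fun x =>
    le_trans (by linarith [hGL_le (f x) x]) (hineq x)
  -- the reflected function
  set g : ℝ → ℝ := fun y => -f (-y) with hgdef
  have hgC : ContDiff ℝ 1 g := ((hf.comp (contDiff_neg)).neg)
  have hgM : ∀ y, |g y| ≤ M := fun y => by simpa [hgdef, abs_neg] using hM (-y)
  have hgderiv : ∀ y, deriv g y = deriv f (-y) := by
    intro y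
    have h1 : HasDerivAt (fun y : ℝ => f (-y)) (deriv f (-y) * (-1)) y :=
      (hdiff (-y)).hasDerivAt.comp y (hasDerivAt_neg y)
    have h2 : HasDerivAt g (-(deriv f (-y) * (-1))) y := h1.neg
    rw [h2.deriv]; ring
  have hgkey : ∀ y, a (-y) * deriv g y + G_L (g y) ≤ lam := by
    intro y
    rw [hgderiv y]
    have : G_L (g y) = G_L (f (-y)) := by rw [hgdef]; exact hGL_even (f (-y))
    rw [this]
    exact hkey (-y)
  -- Part 1: nonemptiness
  have hne : {p : ℝ | 0 ≤ p ∧ G_L p ≤ lam}.Nonempty := by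
    by_contra hemp
    push_neg at hemp
    simp only [Set.not_nonempty_iff_eq_empty, Set.eq_empty_iff_forall_notMem,
      Set.mem_setOf_eq, not_and, not_le] at hemp
    have hall : ∀ p : ℝ, lam < G_L p := by
      intro p
      rcases le_or_gt 0 p with h | h
      · exact hemp p h
      · rw [← hGL_even p]; exact hemp (-p) (by linarith)
    obtain ⟨p₀, hp₀mem, hp₀min⟩ :=
      (isCompact_Icc (a := -M) (b := M)).exists_isMinOn
        (Set.nonempty_Icc.mpr (by linarith [abs_nonneg (f 0), hM 0]))
        hGL_cont.continuousOn
    set ε : ℝ := G_L p₀ - lam with hε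
    have hεpos : 0 < ε := by have := hall p₀; linarith
    refine descend_contra f hf M hM ε hεpos M 0 (abs_le.mp (hM 0)).2 ?_
    intro x _
    have hmem : f x ∈ Icc (-M) M := abs_le.mp (hM x)
    have hmin : G_L p₀ ≤ G_L (f x) := hp₀min hmem
    have h3 : a x * deriv f x ≤ -ε := by have := hkey x; linarith
    have hax := ha_pos x
    have hd0 : deriv f x < 0 := by nlinarith
    calc deriv f x = 1 * deriv f x := (one_mul _).symm
      _ ≤ a x * deriv f x := by nlinarith [ha_le_one x]
      _ ≤ -ε := h3
  refine ⟨hne, ?_⟩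
  -- boundedness above of the set
  have hbdd : BddAbove {p : ℝ | 0 ≤ p ∧ G_L p ≤ lam} := by
    obtain ⟨P, hP⟩ := (hGL_coercive.eventually_ge_atTop (lam + 1)).exists_forall_of_atTop
    refine ⟨P, fun p hp => ?_⟩
    by_contra hc
    push_neg at hc
    have := hP p hc.le
    have := hp.2
    linarith
  have hsup_nonneg : 0 ≤ sSup {p : ℝ | 0 ≤ p ∧ G_L p ≤ lam} := by
    obtain ⟨q, hq⟩ := hne
    exact le_trans hq.1 (le_csSup hbdd hq)
  -- Part 2
  intro x
  rcases le_or_gt (G_L (f x)) lam with hle | hgt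
  · rcases le_or_gt 0 (f x) with h | h
    · rw [abs_of_nonneg h]
      exact le_csSup hbdd ⟨h, hle⟩
    · rw [abs_of_neg h]
      refine le_csSup hbdd ⟨by linarith, ?_⟩
      rw [hGL_even]; exact hle
  · exfalso
    rcases lt_trichotomy (f x) 0 with h | h | h
    · exact sign_contra a ha_pos ha_le_one G_L hGL_even hGL_mono lam f hf M hM hkey x h hgt
    · -- f x = 0 and G_L 0 > lam : contradicts nonemptiness
      obtain ⟨q, hq0, hqle⟩ := hne
      have : G_L 0 ≤ G_L q := hGL_mono (le_refl (0:ℝ)) hq0 hq0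
      rw [h] at hgt
      linarith
    · refine sign_contra (fun y => a (-y)) (fun y => ha_pos (-y)) (fun y => ha_le_one (-y))
        G_L hGL_even hGL_mono lam g hgC M hgM hgkey (-x) ?_ ?_
      · simp [hgdef]; linarith
      · have : G_L (g (-x)) = G_L (f x) := by simp [hgdef]; rw [hGL_even]
        rw [this]; exact hgt
end

section
/- For every λ, p₁, p₂ ∈ ℝ with p₁ < p₂, if either G_U(p₁) < λ < G_L(p₂) or G_U(p₂) < λ < G_L(p₁), then there exists f ∈ S_st^λ such that p₁ ≤ f(x,ω) ≤ p₂ for all ω ∈ Ω and x ∈ ℝ. -/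
open MeasureTheory Filter Set intervalIntegral Topology

namespace HJCore

section Aux

/-- Antiderivative computation. -/
lemma poly_hasDerivAt (c s : ℝ) (k : ℕ) (t : ℝ) :
    HasDerivAt (fun t => c * (t - s) ^ (k + 1) / ((k + 1).factorial : ℝ))
      (c * (t - s) ^ k / (k.factorial : ℝ)) t := by
  have h : HasDerivAt (fun t : ℝ => (t - s) ^ (k + 1))
      ((k + 1 : ℕ) * (t - s) ^ k * 1) t := by
    have := (((hasDerivAt_id t).sub_const s).fun_pow (k + 1))
    simpa using this
  have h2 := (h.const_mul c).div_const ((k + 1).factorial : ℝ)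
  refine h2.congr_deriv ?_
  have hk : ((k + 1).factorial : ℝ) = (k + 1 : ℕ) * (k.factorial : ℝ) := by
    rw [Nat.factorial_succ]; push_cast; ring
  rw [hk]
  have hkf : (k.factorial : ℝ) ≠ 0 := Nat.cast_ne_zero.mpr k.factorial_ne_zero
  have hk1 : ((k : ℝ) + 1) ≠ 0 := by positivity
  field_simp

lemma integ_poly (c s y : ℝ) (k : ℕ) :
    ∫ t in s..y, c * (t - s) ^ k / (k.factorial : ℝ)
      = c * (y - s) ^ (k + 1) / ((k + 1).factorial : ℝ) := by
  have : ∫ t in s..y, c * (t - s) ^ k / (k.factorial : ℝ)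
      = c * (y - s) ^ (k + 1) / ((k + 1).factorial : ℝ)
        - c * (s - s) ^ (k + 1) / ((k + 1).factorial : ℝ) :=
    intervalIntegral.integral_eq_sub_of_hasDerivAt (fun t _ => poly_hasDerivAt c s k t)
      (by
        apply Continuous.intervalIntegrable
        continuity)
  rw [this]
  simp

/-- key integral estimate -/
lemma integ_bound {g : ℝ → ℝ} {s y c : ℝ} {k : ℕ} (hc : 0 ≤ c)
    (hg : ContinuousOn g (Set.uIcc s y))
    (hb : ∀ t ∈ Set.uIcc s y, |g t| ≤ c * |t - s| ^ k / (k.factorial : ℝ)) :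
    |∫ t in s..y, g t| ≤ c * |y - s| ^ (k + 1) / ((k + 1).factorial : ℝ) := by
  have hgi : IntervalIntegrable g volume s y := hg.intervalIntegrable
  have hgai : IntervalIntegrable (fun t => |g t|) volume s y := hgi.abs
  have hpi : ∀ s' y' : ℝ, IntervalIntegrable (fun t => c * (t - s) ^ k / (k.factorial : ℝ))
      volume s' y' := by
    intro s' y'; apply Continuous.intervalIntegrable; continuity
  have hpi2 : ∀ s' y' : ℝ, IntervalIntegrable (fun t => c * (s - t) ^ k / (k.factorial : ℝ))
      volume s' y' := by
    intro s' y'; apply Continuous.intervalIntegrable; continuity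
  rcases le_total s y with h | h
  · have h1 : |∫ t in s..y, g t| ≤ ∫ t in s..y, |g t| := by
      have := intervalIntegral.norm_integral_le_integral_norm (f := g) (μ := volume) h
      simpa [Real.norm_eq_abs] using this
    have h2 : ∫ t in s..y, |g t| ≤ ∫ t in s..y, c * (t - s) ^ k / (k.factorial : ℝ) := by
      apply intervalIntegral.integral_mono_on h hgai (hpi s y)
      intro t ht
      have ht' : t ∈ Set.uIcc s y := by rw [Set.uIcc_of_le h]; exact ht
      have := hb t ht'
      rwa [abs_of_nonneg (by linarith [ht.1] : (0:ℝ) ≤ t - s)] at this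
    rw [abs_of_nonneg (by linarith [h] : (0:ℝ) ≤ y - s)]
    calc |∫ t in s..y, g t| ≤ _ := h1
      _ ≤ _ := h2
      _ = _ := integ_poly c s y k
  · have hsym : |∫ t in s..y, g t| = |∫ t in y..s, g t| := by
      rw [intervalIntegral.integral_symm]; rw [abs_neg]
    have h1 : |∫ t in y..s, g t| ≤ ∫ t in y..s, |g t| := by
      have := intervalIntegral.norm_integral_le_integral_norm (f := g) (μ := volume) h
      simpa [Real.norm_eq_abs] using this
    have h2 : ∫ t in y..s, |g t| ≤ ∫ t in y..s, c * (s - t) ^ k / (k.factorial : ℝ) := by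
      apply intervalIntegral.integral_mono_on h hgai.symm (hpi2 y s)
      intro t ht
      have ht' : t ∈ Set.uIcc s y := by
        rw [Set.uIcc_of_ge h]; exact ht
      have := hb t ht'
      rwa [abs_sub_comm, abs_of_nonneg (by linarith [ht.2] : (0:ℝ) ≤ s - t)] at this
    have h3 : ∫ t in y..s, c * (s - t) ^ k / (k.factorial : ℝ)
        = c * (s - y) ^ (k + 1) / ((k + 1).factorial : ℝ) := by
      have hrw : ∀ t : ℝ, c * (s - t) ^ k / (k.factorial : ℝ)
          = c * ((s - t) - 0) ^ k / (k.factorial : ℝ) := by intro t; ring_nf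
      calc ∫ t in y..s, c * (s - t) ^ k / (k.factorial : ℝ)
          = ∫ t in s - s..s - y, c * (t - 0) ^ k / (k.factorial : ℝ) := by
            rw [← intervalIntegral.integral_comp_sub_left
              (fun u => c * (u - 0) ^ k / (k.factorial : ℝ)) s]
            simp only [sub_zero]
        _ = c * ((s - y) - 0) ^ (k + 1) / ((k + 1).factorial : ℝ) := by
            rw [sub_self]; exact integ_poly c 0 (s - y) k
        _ = c * (s - y) ^ (k + 1) / ((k + 1).factorial : ℝ) := by ring_nf
    rw [hsym, abs_of_nonpos (by linarith [h] : y - s ≤ (0:ℝ))]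
    have : -(y - s) = s - y := by ring
    rw [this]
    calc |∫ t in y..s, g t| ≤ _ := h1
      _ ≤ _ := h2
      _ = _ := h3

/-- FTC for primitives of continuous functions. -/
lemma primitive_hasDerivAt {g : ℝ → ℝ} (hg : Continuous g) (s x : ℝ) :
    HasDerivAt (fun y => ∫ t in s..y, g t) (g x) x :=
  intervalIntegral.integral_hasDerivAt_right (hg.intervalIntegrable _ _)
    (hg.stronglyMeasurableAtFilter _ _) hg.continuousAt

end Aux


structure Env (Ω : Type) [MeasurableSpace Ω] where
  tau : ℝ → Ω → Ω
  a : ℝ → Ω → ℝ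
  Hf : ℝ → ℝ → Ω → ℝ
  lam : ℝ
  p1 : ℝ
  p2 : ℝ
  C : ℝ
  K : ℝ
  hp : p1 < p2
  K_pos : (0:ℝ) < K
  meas_a : Measurable fun q : ℝ × Ω => a q.1 q.2
  a_pos : ∀ x ω, 0 < a x ω
  a_cont : ∀ ω, Continuous fun x => a x ω
  meas_H : Measurable fun q : ℝ × ℝ × Ω => Hf q.1 q.2.1 q.2.2
  H_shift : ∀ p x y ω, Hf p (x + y) ω = Hf p x (tau y ω)
  a_shift : ∀ x y ω, a (x + y) ω = a x (tau y ω)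
  H_bound : ∀ p x ω, p ∈ Set.Icc p1 p2 → |Hf p x ω| ≤ C
  H_lip : ∀ p q x ω, p ∈ Set.Icc p1 p2 → q ∈ Set.Icc p1 p2 →
    |Hf p x ω - Hf q x ω| ≤ K * |p - q|
  H_contx : ∀ p ω, p ∈ Set.Icc p1 p2 → Continuous fun x => Hf p x ω
  sign_hi : ∀ x ω, lam < Hf p2 x ω
  sign_lo : ∀ x ω, Hf p1 x ω < lam

variable {Ω : Type} [MeasurableSpace Ω] (E : Env Ω)

/-- clamp to [p1,p2] -/
noncomputable def Env.proj (p : ℝ) : ℝ := max E.p1 (min E.p2 p)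

lemma Env.proj_mem (p : ℝ) : E.proj p ∈ Set.Icc E.p1 E.p2 := by
  constructor
  · exact le_max_left _ _
  · exact max_le E.hp.le (min_le_left _ _)

lemma Env.proj_eq_self {p : ℝ} (hp : p ∈ Set.Icc E.p1 E.p2) : E.proj p = p := by
  have h1 := hp.1; have h2 := hp.2
  unfold Env.proj
  rw [min_eq_right h2, max_eq_right h1]

lemma Env.proj_lip (p q : ℝ) : |E.proj p - E.proj q| ≤ |p - q| := by
  unfold Env.proj
  have h1 : |min E.p2 p - min E.p2 q| ≤ max |E.p2 - E.p2| |p - q| :=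
    abs_min_sub_min_le_max _ _ _ _
  have h2 : |max E.p1 (min E.p2 p) - max E.p1 (min E.p2 q)| ≤
      max |E.p1 - E.p1| |min E.p2 p - min E.p2 q| := abs_max_sub_max_le_max _ _ _ _
  simp only [sub_self, abs_zero] at h1 h2
  calc |max E.p1 (min E.p2 p) - max E.p1 (min E.p2 q)|
      ≤ max 0 |min E.p2 p - min E.p2 q| := h2
    _ = |min E.p2 p - min E.p2 q| := max_eq_right (abs_nonneg _)
    _ ≤ max 0 |p - q| := h1
    _ = |p - q| := max_eq_right (abs_nonneg _)

lemma Env.proj_continuous : Continuous E.proj :=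
  continuous_const.max (continuous_const.min continuous_id)

lemma Env.proj_measurable : Measurable E.proj := E.proj_continuous.measurable

noncomputable def Env.F (t p : ℝ) (ω : Ω) : ℝ := (E.lam - E.Hf (E.proj p) t ω) / E.a t ω

lemma Env.F_bound (t p : ℝ) (ω : Ω) : |E.F t p ω| ≤ (|E.lam| + E.C) / E.a t ω := by
  have ha := E.a_pos t ω
  unfold Env.F
  rw [abs_div, abs_of_pos ha]
  gcongr
  calc |E.lam - E.Hf (E.proj p) t ω| ≤ |E.lam| + |E.Hf (E.proj p) t ω| := abs_sub _ _
    _ ≤ |E.lam| + E.C := by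
        gcongr
        exact E.H_bound _ t ω (E.proj_mem p)

lemma Env.F_lip (t p q : ℝ) (ω : Ω) :
    |E.F t p ω - E.F t q ω| ≤ E.K / E.a t ω * |p - q| := by
  have ha := E.a_pos t ω
  have h0 : E.F t p ω - E.F t q ω
      = (E.Hf (E.proj q) t ω - E.Hf (E.proj p) t ω) / E.a t ω := by
    unfold Env.F; field_simp
    ring
  have h1 : |E.Hf (E.proj q) t ω - E.Hf (E.proj p) t ω| ≤ E.K * |p - q| := by
    calc |E.Hf (E.proj q) t ω - E.Hf (E.proj p) t ω|
        ≤ E.K * |E.proj q - E.proj p| := E.H_lip _ _ t ω (E.proj_mem q) (E.proj_mem p)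
      _ ≤ E.K * |p - q| := by
          rw [abs_sub_comm (E.proj q)]
          exact mul_le_mul_of_nonneg_left (E.proj_lip p q) E.K_pos.le
  rw [h0, abs_div, abs_of_pos ha, div_mul_eq_mul_div]
  gcongr

lemma Env.F_cont_t (p : ℝ) (ω : Ω) : Continuous fun t => E.F t p ω :=
  (continuous_const.sub (E.H_contx _ ω (E.proj_mem p))).div (E.a_cont ω)
    fun t => (E.a_pos t ω).ne'

lemma Env.F_shift (t y p : ℝ) (ω : Ω) : E.F (t + y) p ω = E.F t p (E.tau y ω) := by
  unfold Env.F
  rw [E.H_shift, E.a_shift]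

lemma Env.F_neg_of_ge (t p : ℝ) (ω : Ω) (hp : E.p2 ≤ p) : E.F t p ω < 0 := by
  have hproj : E.proj p = E.p2 := by
    unfold Env.proj; rw [min_eq_left hp, max_eq_right E.hp.le]
  unfold Env.F
  rw [hproj]
  exact div_neg_of_neg_of_pos (by linarith [E.sign_hi t ω]) (E.a_pos t ω)

lemma Env.F_pos_of_le (t p : ℝ) (ω : Ω) (hp : p ≤ E.p1) : 0 < E.F t p ω := by
  have hproj : E.proj p = E.p1 := by
    unfold Env.proj; rw [max_eq_left (min_le_of_right_le hp)]
  unfold Env.F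
  rw [hproj]
  exact div_pos (by linarith [E.sign_lo t ω]) (E.a_pos t ω)

lemma Env.F_meas : Measurable fun q : ℝ × ℝ × Ω => E.F q.1 q.2.1 q.2.2 := by
  unfold Env.F
  have h1 : Measurable fun q : ℝ × ℝ × Ω => E.Hf (E.proj q.2.1) q.1 q.2.2 :=
    E.meas_H.comp (((E.proj_measurable.comp (measurable_fst.comp measurable_snd))).prodMk
      (measurable_fst.prodMk (measurable_snd.comp measurable_snd)))
  have h2 : Measurable fun q : ℝ × ℝ × Ω => E.a q.1 q.2.2 :=
    E.meas_a.comp (measurable_fst.prodMk (measurable_snd.comp measurable_snd))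
  exact (measurable_const.sub h1).div h2

lemma Env.F_meas_two (ω : Ω) : Measurable fun q : ℝ × ℝ => E.F q.1 q.2 ω :=
  E.F_meas.comp (measurable_fst.prodMk (measurable_snd.prodMk measurable_const))

lemma Env.meas_comp {u : ℝ → ℝ} (hu : Measurable u) (ω : Ω) :
    Measurable fun t => E.F t (u t) ω :=
  (E.F_meas_two ω).comp (measurable_id.prodMk hu)

lemma Env.cont_comp {g : ℝ → ℝ} (hg : Continuous g) (ω : Ω) :
    Continuous fun t => E.F t (g t) ω := by
  rw [continuous_iff_continuousAt]
  intro t₀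
  have hψ : Continuous fun t =>
      E.K / E.a t ω * |g t - g t₀| + |E.F t (g t₀) ω - E.F t₀ (g t₀) ω| :=
    ((continuous_const.div (E.a_cont ω) fun t => (E.a_pos t ω).ne').mul
      ((hg.sub continuous_const).abs)).add ((E.F_cont_t (g t₀) ω).sub continuous_const).abs
  have h0 : Tendsto (fun t =>
      E.K / E.a t ω * |g t - g t₀| + |E.F t (g t₀) ω - E.F t₀ (g t₀) ω|) (𝓝 t₀) (𝓝 0) := by
    have := hψ.tendsto t₀
    simpa using this
  unfold ContinuousAt
  rw [tendsto_iff_dist_tendsto_zero]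
  apply squeeze_zero (fun t => dist_nonneg) _ h0
  intro t
  calc dist (E.F t (g t) ω) (E.F t₀ (g t₀) ω)
      ≤ dist (E.F t (g t) ω) (E.F t (g t₀) ω)
        + dist (E.F t (g t₀) ω) (E.F t₀ (g t₀) ω) := dist_triangle _ _ _
    _ ≤ E.K / E.a t ω * |g t - g t₀| + |E.F t (g t₀) ω - E.F t₀ (g t₀) ω| := by
        refine add_le_add ?_ ?_
        · rw [Real.dist_eq]; exact E.F_lip t (g t) (g t₀) ω
        · rw [Real.dist_eq]


end HJCore
namespace HJCore
/-- Picard iterates, base point `s`, initial value `p2`. -/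
noncomputable def Env.it {Ω : Type} [MeasurableSpace Ω] (E : Env Ω) : ℕ → ℝ → ℝ → Ω → ℝ
  | 0, _, _, _ => E.p2
  | (k+1), s, x, ω => E.p2 + ∫ t in s..x, E.F t (Env.it E k s t ω) ω

variable {Ω : Type} [MeasurableSpace Ω] (E : Env Ω)

lemma Env.it_zero (s x : ℝ) (ω : Ω) : E.it 0 s x ω = E.p2 := rfl

lemma Env.it_succ (k : ℕ) (s x : ℝ) (ω : Ω) :
    E.it (k+1) s x ω = E.p2 + ∫ t in s..x, E.F t (E.it k s t ω) ω := rfl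

lemma Env.it_cont (k : ℕ) (s : ℝ) (ω : Ω) : Continuous fun x => E.it k s x ω := by
  induction k with
  | zero => exact continuous_const
  | succ k IH =>
      simp only [Env.it_succ]
      refine continuous_const.add ?_
      have hG : Continuous fun t => E.F t (E.it k s t ω) ω := E.cont_comp IH ω
      exact Differentiable.continuous fun x => (primitive_hasDerivAt hG s x).differentiableAt

lemma Env.it_self (k : ℕ) (s : ℝ) (ω : Ω) : E.it k s s ω = E.p2 := by
  cases k <;> simp [Env.it]

lemma meas_param_integral {G : ℝ → Ω → ℝ} (hG : Measurable fun q : ℝ × Ω => G q.1 q.2)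
    (s x : ℝ) : Measurable fun ω => ∫ t in s..x, G t ω := by
  have h1 : ∀ c d : ℝ, Measurable fun ω => ∫ t in Set.Ioc c d, G t ω := by
    intro c d
    have hsm : StronglyMeasurable fun q : Ω × ℝ => G q.2 q.1 :=
      (hG.comp measurable_swap).stronglyMeasurable
    exact (MeasureTheory.StronglyMeasurable.integral_prod_right'
      (ν := volume.restrict (Set.Ioc c d)) hsm).measurable
  have : (fun ω => ∫ t in s..x, G t ω)
      = fun ω => (∫ t in Set.Ioc s x, G t ω) - ∫ t in Set.Ioc x s, G t ω := by
    funext ω; rfl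
  rw [this]
  exact (h1 s x).sub (h1 x s)

lemma Env.it_meas (k : ℕ) (s : ℝ) : Measurable fun q : ℝ × Ω => E.it k s q.1 q.2 := by
  induction k with
  | zero => exact measurable_const
  | succ k IH =>
      have hGk : Measurable fun q : ℝ × Ω => E.F q.1 (E.it k s q.1 q.2) q.2 :=
        E.F_meas.comp (measurable_fst.prodMk (IH.prodMk measurable_snd))
      have key : ∀ x : ℝ, Measurable fun ω => E.it (k+1) s x ω := by
        intro x
        simp only [Env.it_succ]
        exact measurable_const.add (meas_param_integral hGk s x)
      exact measurable_uncurry_of_continuous_of_measurable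
        (fun ω => E.it_cont (k+1) s ω) key

lemma Env.C_nonneg (ω : Ω) : 0 ≤ E.C :=
  (abs_nonneg _).trans (E.H_bound E.p2 0 ω (Set.right_mem_Icc.mpr E.hp.le))

lemma Env.exists_alpha (s x : ℝ) (ω : Ω) :
    ∃ α : ℝ, 0 < α ∧ ∀ t ∈ Set.uIcc s x, α ≤ E.a t ω := by
  obtain ⟨t₀, ht₀, hmin⟩ := isCompact_uIcc.exists_isMinOn (Set.nonempty_uIcc)
    ((E.a_cont ω).continuousOn (s := Set.uIcc s x))
  exact ⟨E.a t₀ ω, E.a_pos t₀ ω, fun t ht => hmin ht⟩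

lemma Env.it_diff_bound (s x : ℝ) (ω : Ω) {α : ℝ} (hα0 : 0 < α)
    (hα : ∀ t ∈ Set.uIcc s x, α ≤ E.a t ω) (k : ℕ) :
    ∀ y ∈ Set.uIcc s x, |E.it (k+1) s y ω - E.it k s y ω|
      ≤ ((|E.lam| + E.C) / α) * (E.K / α) ^ k * |y - s| ^ (k+1) / ((k+1).factorial : ℝ) := by
  have hBnn : 0 ≤ (|E.lam| + E.C) / α :=
    div_nonneg (by linarith [abs_nonneg E.lam, E.C_nonneg ω]) hα0.le
  have hLnn : 0 ≤ E.K / α := div_nonneg E.K_pos.le hα0.le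
  induction k with
  | zero =>
      intro y hy
      have hsub : Set.uIcc s y ⊆ Set.uIcc s x := Set.uIcc_subset_uIcc Set.left_mem_uIcc hy
      have hdiff : E.it 1 s y ω - E.it 0 s y ω = ∫ t in s..y, E.F t (E.it 0 s t ω) ω := by
        rw [Env.it_succ, Env.it_zero]; ring
      rw [hdiff]
      have := integ_bound (g := fun t => E.F t (E.it 0 s t ω) ω) (s := s) (y := y)
        (c := (|E.lam| + E.C) / α) (k := 0) hBnn
        ((E.cont_comp (E.it_cont 0 s ω) ω).continuousOn)
        (fun t ht => by
          have h1 := E.F_bound t (E.it 0 s t ω) ω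
          have h2 : α ≤ E.a t ω := hα t (hsub ht)
          have h3 : (|E.lam| + E.C) / E.a t ω ≤ (|E.lam| + E.C) / α := by
            apply div_le_div_of_nonneg_left _ hα0 h2
            linarith [abs_nonneg E.lam, E.C_nonneg ω]
          simpa using h1.trans h3)
      simpa using this
  | succ k IH =>
      intro y hy
      have hsub : Set.uIcc s y ⊆ Set.uIcc s x := Set.uIcc_subset_uIcc Set.left_mem_uIcc hy
      have hint1 : IntervalIntegrable (fun t => E.F t (E.it (k+1) s t ω) ω) volume s y :=
        ((E.cont_comp (E.it_cont (k+1) s ω) ω)).intervalIntegrable s y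
      have hint0 : IntervalIntegrable (fun t => E.F t (E.it k s t ω) ω) volume s y :=
        ((E.cont_comp (E.it_cont k s ω) ω)).intervalIntegrable s y
      have hdiff : E.it (k+2) s y ω - E.it (k+1) s y ω
          = ∫ t in s..y, (E.F t (E.it (k+1) s t ω) ω - E.F t (E.it k s t ω) ω) := by
        rw [E.it_succ (k+1), E.it_succ k, intervalIntegral.integral_sub hint1 hint0]
        ring
      rw [hdiff]
      have := integ_bound (g := fun t => E.F t (E.it (k+1) s t ω) ω - E.F t (E.it k s t ω) ω)
        (s := s) (y := y)
        (c := (|E.lam| + E.C) / α * (E.K / α) ^ (k+1)) (k := k+1)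
        (mul_nonneg hBnn (pow_nonneg hLnn _))
        (((E.cont_comp (E.it_cont (k+1) s ω) ω).sub
          (E.cont_comp (E.it_cont k s ω) ω)).continuousOn)
        (fun t ht => by
          have h1 := E.F_lip t (E.it (k+1) s t ω) (E.it k s t ω) ω
          have h2 : α ≤ E.a t ω := hα t (hsub ht)
          have h3 : E.K / E.a t ω ≤ E.K / α :=
            div_le_div_of_nonneg_left E.K_pos.le hα0 h2
          have h4 := IH t (hsub ht)
          calc |E.F t (E.it (k+1) s t ω) ω - E.F t (E.it k s t ω) ω|
              ≤ E.K / E.a t ω * |E.it (k+1) s t ω - E.it k s t ω| := h1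
            _ ≤ E.K / α * ((|E.lam| + E.C) / α * (E.K / α) ^ k * |t - s| ^ (k+1)
                / ((k+1).factorial : ℝ)) := by
                apply mul_le_mul h3 h4 (abs_nonneg _) hLnn
            _ = (|E.lam| + E.C) / α * (E.K / α) ^ (k+1) * |t - s| ^ (k+1)
                / ((k+1).factorial : ℝ) := by ring
          )
      simpa using this

lemma summable_aux (B L R : ℝ) (hB : 0 ≤ B) (hL : 0 ≤ L) (hR : 0 ≤ R) :
    Summable (fun k : ℕ => B * L ^ k * R ^ (k+1) / ((k+1).factorial : ℝ)) := by
  have h := (Real.summable_pow_div_factorial (L * R)).mul_left (B * R)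
  apply Summable.of_nonneg_of_le (fun k => by positivity) _ h
  intro k
  have hf : (0:ℝ) < (k.factorial : ℝ) := by
    exact_mod_cast Nat.cast_pos.mpr k.factorial_pos
  have h1 : (k.factorial : ℝ) ≤ ((k+1).factorial : ℝ) := by
    exact_mod_cast Nat.factorial_le (Nat.le_succ k)
  have h2 : B * L ^ k * R ^ (k+1) / ((k+1).factorial : ℝ)
      ≤ B * L ^ k * R ^ (k+1) / (k.factorial : ℝ) :=
    div_le_div_of_nonneg_left (by positivity) hf h1
  refine h2.trans (le_of_eq ?_)
  rw [mul_pow]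
  ring

lemma Env.it_cauchy (s x : ℝ) (ω : Ω) : CauchySeq fun k => E.it k s x ω := by
  obtain ⟨α, hα0, hα⟩ := E.exists_alpha s x ω
  apply cauchySeq_of_summable_dist
  have hB : 0 ≤ (|E.lam| + E.C) / α :=
    div_nonneg (by linarith [abs_nonneg E.lam, E.C_nonneg ω]) hα0.le
  have hs := summable_aux ((|E.lam| + E.C) / α) (E.K / α) |x - s| hB
    (div_nonneg E.K_pos.le hα0.le) (abs_nonneg _)
  apply Summable.of_nonneg_of_le (fun k => dist_nonneg) _ hs
  intro k
  rw [Real.dist_eq, abs_sub_comm]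
  exact E.it_diff_bound s x ω hα0 hα k x Set.right_mem_uIcc

noncomputable def Env.w (s x : ℝ) (ω : Ω) : ℝ := limUnder atTop fun k => E.it k s x ω

lemma Env.it_tendsto_w (s x : ℝ) (ω : Ω) :
    Tendsto (fun k => E.it k s x ω) atTop (𝓝 (E.w s x ω)) := by
  obtain ⟨l, hl⟩ := cauchySeq_tendsto_of_complete (E.it_cauchy s x ω)
  rw [Env.w, hl.limUnder_eq]
  exact hl

lemma Env.w_self (s : ℝ) (ω : Ω) : E.w s s ω = E.p2 := by
  have h := E.it_tendsto_w s s ω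
  simp only [Env.it_self] at h
  exact (tendsto_nhds_unique h tendsto_const_nhds)

lemma Env.w_meas (s x : ℝ) : Measurable fun ω => E.w s x ω := by
  apply measurable_of_tendsto_metrizable (f := fun k ω => E.it k s x ω)
  · exact fun k => (E.it_meas k s).comp (measurable_const.prodMk measurable_id)
  · rw [tendsto_pi_nhds]
    exact fun ω => E.it_tendsto_w s x ω

lemma Env.F_cont_p (t : ℝ) (ω : Ω) : Continuous fun p => E.F t p ω := by
  rw [continuous_iff_continuousAt]
  intro p₀
  unfold ContinuousAt
  rw [tendsto_iff_dist_tendsto_zero]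
  have hb : ∀ p, dist (E.F t p ω) (E.F t p₀ ω) ≤ E.K / E.a t ω * |p - p₀| := by
    intro p; rw [Real.dist_eq]; exact E.F_lip t p p₀ ω
  have hc : Tendsto (fun p : ℝ => E.K / E.a t ω * |p - p₀|) (𝓝 p₀) (𝓝 0) := by
    have hcont : Continuous fun p : ℝ => E.K / E.a t ω * |p - p₀| :=
      continuous_const.mul ((continuous_id.sub continuous_const).abs)
    simpa using hcont.tendsto p₀
  exact squeeze_zero (fun _ => dist_nonneg) hb hc

lemma Env.w_fixed (s x : ℝ) (ω : Ω) :
    E.w s x ω = E.p2 + ∫ t in s..x, E.F t (E.w s t ω) ω := by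
  have h1 : Tendsto (fun k => E.it (k+1) s x ω) atTop (𝓝 (E.w s x ω)) :=
    (E.it_tendsto_w s x ω).comp (tendsto_add_atTop_nat 1)
  obtain ⟨α, hα0, hα⟩ := E.exists_alpha s x ω
  have h2 : Tendsto (fun k => E.p2 + ∫ t in s..x, E.F t (E.it k s t ω) ω) atTop
      (𝓝 (E.p2 + ∫ t in s..x, E.F t (E.w s t ω) ω)) := by
    refine Tendsto.const_add _ ?_
    apply intervalIntegral.tendsto_integral_filter_of_dominated_convergence
      (bound := fun _ => (|E.lam| + E.C) / α)
    · exact Eventually.of_forall fun k =>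
        ((E.cont_comp (E.it_cont k s ω) ω)).aestronglyMeasurable
    · refine Eventually.of_forall fun k => MeasureTheory.ae_of_all _ fun t ht => ?_
      rw [Real.norm_eq_abs]
      refine (E.F_bound t (E.it k s t ω) ω).trans ?_
      exact div_le_div_of_nonneg_left
        (by linarith [abs_nonneg E.lam, E.C_nonneg ω]) hα0 (hα t (Set.uIoc_subset_uIcc ht))
    · exact intervalIntegrable_const
    · refine MeasureTheory.ae_of_all _ fun t _ => ?_
      exact ((E.F_cont_p t ω).tendsto _).comp (E.it_tendsto_w s t ω)
  have h3 : ∀ k : ℕ, E.it (k+1) s x ω = E.p2 + ∫ t in s..x, E.F t (E.it k s t ω) ω :=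
    fun k => E.it_succ k s x ω
  rw [funext h3] at h1
  exact tendsto_nhds_unique h1 h2

lemma Env.w_meas_t (s : ℝ) (ω : Ω) : Measurable fun t => E.w s t ω :=
  measurable_of_tendsto_metrizable (fun k => (E.it_cont k s ω).measurable)
    (tendsto_pi_nhds.mpr fun t => E.it_tendsto_w s t ω)

lemma Env.intInt_of_meas_bound {g : ℝ → ℝ} (ω : Ω) (hg : Measurable g)
    (hb : ∀ t, |g t| ≤ (|E.lam| + E.C) / E.a t ω) (c d : ℝ) :
    IntervalIntegrable g volume c d := by
  rw [intervalIntegrable_iff]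
  have hbnd : Continuous fun t => (|E.lam| + E.C) / E.a t ω :=
    continuous_const.div (E.a_cont ω) fun t => (E.a_pos t ω).ne'
  refine MeasureTheory.Integrable.mono'
    (g := fun t => (|E.lam| + E.C) / E.a t ω)
    (intervalIntegrable_iff.mp (hbnd.intervalIntegrable c d))
    hg.aestronglyMeasurable (MeasureTheory.ae_of_all _ fun t => ?_)
  rw [Real.norm_eq_abs]; exact hb t

lemma Env.intInt_w (s c d : ℝ) (ω : Ω) :
    IntervalIntegrable (fun t => E.F t (E.w s t ω) ω) volume c d :=
  E.intInt_of_meas_bound ω (E.meas_comp (E.w_meas_t s ω) ω)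
    (fun t => E.F_bound t (E.w s t ω) ω) c d

lemma Env.w_sub (s x y : ℝ) (ω : Ω) :
    E.w s x ω - E.w s y ω = ∫ t in y..x, E.F t (E.w s t ω) ω := by
  rw [E.w_fixed s x ω, E.w_fixed s y ω]
  have := intervalIntegral.integral_interval_sub_left (E.intInt_w s s x ω) (E.intInt_w s s y ω)
  rw [← this]; ring

lemma Env.w_cont (s : ℝ) (ω : Ω) : Continuous fun x => E.w s x ω := by
  rw [continuous_iff_continuousAt]
  intro x₀
  obtain ⟨α, hα0, hα⟩ := E.exists_alpha (x₀ - 1) (x₀ + 1) ω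
  unfold ContinuousAt
  rw [tendsto_iff_dist_tendsto_zero]
  have hev : ∀ᶠ x in 𝓝 x₀, dist (E.w s x ω) (E.w s x₀ ω)
      ≤ (|E.lam| + E.C) / α * |x - x₀| := by
    filter_upwards [Metric.ball_mem_nhds x₀ one_pos] with x hx
    have hJ : Set.uIcc x₀ x ⊆ Set.uIcc (x₀ - 1) (x₀ + 1) := by
      apply Set.uIcc_subset_uIcc
      · rw [Set.uIcc_of_le (by linarith)]
        exact ⟨by linarith, by linarith⟩
      · rw [Set.uIcc_of_le (by linarith)]
        rw [Metric.mem_ball, Real.dist_eq, abs_lt] at hx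
        exact ⟨by linarith, by linarith⟩
    rw [Real.dist_eq, E.w_sub s x x₀ ω]
    have hCb : ∀ t ∈ Set.uIoc x₀ x, ‖E.F t (E.w s t ω) ω‖ ≤ (|E.lam| + E.C) / α := by
      intro t ht
      rw [Real.norm_eq_abs]
      refine (E.F_bound t (E.w s t ω) ω).trans ?_
      exact div_le_div_of_nonneg_left
        (by linarith [abs_nonneg E.lam, E.C_nonneg ω]) hα0
        (hα t (hJ (Set.uIoc_subset_uIcc ht)))
    have hle := intervalIntegral.norm_integral_le_of_norm_le_const hCb
    rwa [Real.norm_eq_abs] at hle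
  have h0 : Tendsto (fun x => (|E.lam| + E.C) / α * |x - x₀|) (𝓝 x₀) (𝓝 0) := by
    have hcont : Continuous fun x : ℝ => (|E.lam| + E.C) / α * |x - x₀| :=
      continuous_const.mul ((continuous_id.sub continuous_const).abs)
    simpa using hcont.tendsto x₀
  exact squeeze_zero' (Eventually.of_forall fun _ => dist_nonneg) hev h0

lemma Env.w_hasDeriv (s x : ℝ) (ω : Ω) :
    HasDerivAt (fun y => E.w s y ω) (E.F x (E.w s x ω) ω) x := by
  have hg : Continuous fun t => E.F t (E.w s t ω) ω := E.cont_comp (E.w_cont s ω) ω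
  have h := (hasDerivAt_const x E.p2).fun_add (primitive_hasDerivAt hg s x)
  have heq : (fun y => E.p2 + ∫ t in s..y, E.F t (E.w s t ω) ω) = fun y => E.w s y ω :=
    funext fun y => (E.w_fixed s y ω).symm
  rw [heq] at h
  simpa using h

/-- Uniqueness of solutions of the ODE. -/
lemma Env.sol_unique {f g : ℝ → ℝ} (ω : Ω)
    (hf : ∀ t, HasDerivAt f (E.F t (f t) ω) t) (hg : ∀ t, HasDerivAt g (E.F t (g t) ω) t)
    {s₀ : ℝ} (h0 : f s₀ = g s₀) (x : ℝ) : f x = g x := by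
  have hfc : Continuous f := Differentiable.continuous fun t => (hf t).differentiableAt
  have hgc : Continuous g := Differentiable.continuous fun t => (hg t).differentiableAt
  obtain ⟨α, hα0, hα⟩ := E.exists_alpha s₀ x ω
  obtain ⟨M, hM⟩ := isCompact_uIcc.exists_bound_of_continuousOn
    (f := fun y => f y - g y) (s := Set.uIcc s₀ x) ((hfc.sub hgc).continuousOn)
  have hM' : ∀ y ∈ Set.uIcc s₀ x, |f y - g y| ≤ M := by
    intro y hy; have := hM y hy; rwa [Real.norm_eq_abs] at this
  have hM0 : 0 ≤ M := le_trans (abs_nonneg _) (hM' s₀ Set.left_mem_uIcc)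
  have hfeq : ∀ y, f y - f s₀ = ∫ t in s₀..y, E.F t (f t) ω := fun y =>
    (intervalIntegral.integral_eq_sub_of_hasDerivAt
      (fun t _ => hf t) ((E.cont_comp hfc ω).intervalIntegrable _ _)).symm
  have hgeq : ∀ y, g y - g s₀ = ∫ t in s₀..y, E.F t (g t) ω := fun y =>
    (intervalIntegral.integral_eq_sub_of_hasDerivAt
      (fun t _ => hg t) ((E.cont_comp hgc ω).intervalIntegrable _ _)).symm
  have key : ∀ k : ℕ, ∀ y ∈ Set.uIcc s₀ x,
      |f y - g y| ≤ M * (E.K / α) ^ k * |y - s₀| ^ k / (k.factorial : ℝ) := by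
    intro k
    induction k with
    | zero => intro y hy; simpa using hM' y hy
    | succ k IH =>
        intro y hy
        have hsub : Set.uIcc s₀ y ⊆ Set.uIcc s₀ x :=
          Set.uIcc_subset_uIcc Set.left_mem_uIcc hy
        have hdiff : f y - g y = ∫ t in s₀..y, (E.F t (f t) ω - E.F t (g t) ω) := by
          rw [intervalIntegral.integral_sub ((E.cont_comp hfc ω).intervalIntegrable _ _)
            ((E.cont_comp hgc ω).intervalIntegrable _ _), ← hfeq y, ← hgeq y, h0]
          ring
        rw [hdiff]
        have hb := integ_bound (g := fun t => E.F t (f t) ω - E.F t (g t) ω)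
          (s := s₀) (y := y) (c := M * (E.K / α) ^ (k+1)) (k := k)
          (mul_nonneg hM0 (pow_nonneg (div_nonneg E.K_pos.le hα0.le) _))
          (((E.cont_comp hfc ω).sub (E.cont_comp hgc ω)).continuousOn)
          (fun t ht => by
            have h1 := E.F_lip t (f t) (g t) ω
            have h2 : α ≤ E.a t ω := hα t (hsub ht)
            have h3 : E.K / E.a t ω ≤ E.K / α :=
              div_le_div_of_nonneg_left E.K_pos.le hα0 h2
            calc |E.F t (f t) ω - E.F t (g t) ω|
                ≤ E.K / E.a t ω * |f t - g t| := h1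
              _ ≤ E.K / α * (M * (E.K / α) ^ k * |t - s₀| ^ k / (k.factorial : ℝ)) :=
                  mul_le_mul h3 (IH t (hsub ht)) (abs_nonneg _)
                    (div_nonneg E.K_pos.le hα0.le)
              _ = M * (E.K / α) ^ (k+1) * |t - s₀| ^ k / (k.factorial : ℝ) := by ring)
        simpa using hb
  have hterm : Tendsto (fun k : ℕ => M * (E.K / α) ^ k * |x - s₀| ^ k / (k.factorial : ℝ))
      atTop (𝓝 0) := by
    have h1 := (FloorSemiring.tendsto_pow_div_factorial_atTop (K := ℝ)
      (E.K / α * |x - s₀|)).const_mul M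
    have heq : (fun k : ℕ => M * (E.K / α * |x - s₀|) ^ k / (k.factorial : ℝ))
        = fun k : ℕ => M * (E.K / α) ^ k * |x - s₀| ^ k / (k.factorial : ℝ) := by
      funext k; rw [mul_pow]; ring
    rw [← heq]
    simpa [mul_div_assoc] using h1
  have hle : |f x - g x| ≤ 0 :=
    ge_of_tendsto hterm (Eventually.of_forall fun k => key k x Set.right_mem_uIcc)
  have := abs_nonneg (f x - g x)
  have hz : |f x - g x| = 0 := le_antisymm hle this
  have := abs_eq_zero.mp hz
  linarith [this]

/-- Comparison principle. -/
lemma Env.sol_le {f g : ℝ → ℝ} (ω : Ω)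
    (hf : ∀ t, HasDerivAt f (E.F t (f t) ω) t) (hg : ∀ t, HasDerivAt g (E.F t (g t) ω) t)
    {s₀ : ℝ} (h0 : f s₀ ≤ g s₀) {x : ℝ} (hx : s₀ ≤ x) : f x ≤ g x := by
  by_contra hlt
  push_neg at hlt
  have hfc : Continuous f := Differentiable.continuous fun t => (hf t).differentiableAt
  have hgc : Continuous g := Differentiable.continuous fun t => (hg t).differentiableAt
  set S := Set.Icc s₀ x ∩ {t | f t ≤ g t} with hS
  have hne : S.Nonempty := ⟨s₀, ⟨Set.left_mem_Icc.mpr hx, h0⟩⟩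
  have hbdd : BddAbove S := ⟨x, fun t ht => ht.1.2⟩
  set x₀ := sSup S with hx₀
  have hclosed : IsClosed S := isClosed_Icc.inter (isClosed_le hfc hgc)
  have hx₀S : x₀ ∈ S := hclosed.csSup_mem hne hbdd
  have hx₀x : x₀ ≠ x := by
    intro hcontr
    have := hx₀S.2
    rw [hcontr] at this
    exact absurd this (not_le.mpr hlt)
  have hx₀lt : x₀ < x := lt_of_le_of_ne hx₀S.1.2 hx₀x
  have hle2 : f x₀ ≤ g x₀ := hx₀S.2
  have heq : f x₀ = g x₀ := by
    rcases lt_or_eq_of_le hle2 with hlt2 | heq2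
    · exfalso
      have hev : ∀ᶠ t in 𝓝 x₀, f t < g t :=
        (isOpen_lt hfc hgc).eventually_mem hlt2
      obtain ⟨δ, hδpos, hδ⟩ := Metric.eventually_nhds_iff.mp hev
      set t := min x (x₀ + δ / 2) with ht
      have htgt : x₀ < t := lt_min hx₀lt (by linarith)
      have htle : t ≤ x := min_le_left _ _
      have htS : t ∈ S := by
        refine ⟨⟨hx₀S.1.1.trans htgt.le, htle⟩, ?_⟩
        have : dist t x₀ < δ := by
          rw [Real.dist_eq, abs_of_pos (by linarith)]
          have : t ≤ x₀ + δ / 2 := min_le_right _ _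
          linarith
        exact (hδ this).le
      have := le_csSup hbdd htS
      linarith
    · exact heq2
  have := E.sol_unique ω hf hg heq x
  linarith

/-- Invariance of [p1, p2] forward in time. -/
lemma Env.w_mem {s x : ℝ} (ω : Ω) (hsx : s ≤ x) : E.w s x ω ∈ Set.Icc E.p1 E.p2 := by
  have hwc := E.w_cont s ω
  constructor
  · by_contra h
    push_neg at h
    set S := Set.Icc s x ∩ {t | E.p1 ≤ E.w s t ω} with hS
    have hsS : s ∈ S := ⟨Set.left_mem_Icc.mpr hsx, by
      show E.p1 ≤ E.w s s ω
      rw [E.w_self]; exact E.hp.le⟩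
    have hne : S.Nonempty := ⟨s, hsS⟩
    have hbdd : BddAbove S := ⟨x, fun t ht => ht.1.2⟩
    set x₀ := sSup S with hx₀
    have hclosed : IsClosed S := isClosed_Icc.inter (isClosed_le continuous_const hwc)
    have hx₀S : x₀ ∈ S := hclosed.csSup_mem hne hbdd
    have hx₀x : x₀ < x := lt_of_le_of_ne hx₀S.1.2 (by
      intro hcontr
      have := hx₀S.2
      rw [hcontr] at this
      exact absurd this (not_le.mpr h))
    have hbet : ∀ t ∈ Set.Ioo x₀ x, E.w s t ω < E.p1 := by
      intro t ht
      by_contra h2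
      push_neg at h2
      have htS : t ∈ S := ⟨⟨hx₀S.1.1.trans ht.1.le, ht.2.le⟩, h2⟩
      have := le_csSup hbdd htS
      linarith [ht.1]
    have hmono : StrictMonoOn (fun t => E.w s t ω) (Set.Icc x₀ x) := by
      apply strictMonoOn_of_deriv_pos (convex_Icc _ _) hwc.continuousOn
      intro t ht
      rw [interior_Icc] at ht
      rw [(E.w_hasDeriv s t ω).deriv]
      exact E.F_pos_of_le t _ ω (hbet t ht).le
    have := hmono (Set.left_mem_Icc.mpr hx₀x.le) (Set.right_mem_Icc.mpr hx₀x.le) hx₀x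
    have hp1x₀ : E.p1 ≤ E.w s x₀ ω := hx₀S.2
    simp only at this
    linarith
  · by_contra h
    push_neg at h
    set S := Set.Icc s x ∩ {t | E.w s t ω ≤ E.p2} with hS
    have hsS : s ∈ S := ⟨Set.left_mem_Icc.mpr hsx, by
      show E.w s s ω ≤ E.p2
      rw [E.w_self]⟩
    have hne : S.Nonempty := ⟨s, hsS⟩
    have hbdd : BddAbove S := ⟨x, fun t ht => ht.1.2⟩
    set x₀ := sSup S with hx₀
    have hclosed : IsClosed S := isClosed_Icc.inter (isClosed_le hwc continuous_const)
    have hx₀S : x₀ ∈ S := hclosed.csSup_mem hne hbdd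
    have hx₀x : x₀ < x := lt_of_le_of_ne hx₀S.1.2 (by
      intro hcontr
      have := hx₀S.2
      rw [hcontr] at this
      exact absurd this (not_le.mpr h))
    have hbet : ∀ t ∈ Set.Ioo x₀ x, E.p2 < E.w s t ω := by
      intro t ht
      by_contra h2
      push_neg at h2
      have htS : t ∈ S := ⟨⟨hx₀S.1.1.trans ht.1.le, ht.2.le⟩, h2⟩
      have := le_csSup hbdd htS
      linarith [ht.1]
    have hanti : StrictAntiOn (fun t => E.w s t ω) (Set.Icc x₀ x) := by
      apply strictAntiOn_of_deriv_neg (convex_Icc _ _) hwc.continuousOn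
      intro t ht
      rw [interior_Icc] at ht
      rw [(E.w_hasDeriv s t ω).deriv]
      exact E.F_neg_of_ge t _ ω (hbet t ht).le
    have := hanti (Set.left_mem_Icc.mpr hx₀x.le) (Set.right_mem_Icc.mpr hx₀x.le) hx₀x
    have hp2x₀ : E.w s x₀ ω ≤ E.p2 := hx₀S.2
    simp only at this
    linarith

lemma Env.w_mono {s' s x : ℝ} (ω : Ω) (h1 : s' ≤ s) (h2 : s ≤ x) :
    E.w s' x ω ≤ E.w s x ω := by
  have hbase : E.w s' s ω ≤ E.w s s ω := by
    rw [E.w_self]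
    exact (E.w_mem ω h1).2
  exact E.sol_le ω (fun t => E.w_hasDeriv s' t ω) (fun t => E.w_hasDeriv s t ω) hbase h2

lemma Env.w_shift (s x y : ℝ) (ω : Ω) : E.w s x ω = E.w (s - y) (x - y) (E.tau y ω) := by
  have hf : ∀ t, HasDerivAt (fun u => E.w s (u + y) ω)
      (E.F t (E.w s (t + y) ω) (E.tau y ω)) t := by
    intro t
    have h1 := E.w_hasDeriv s (t + y) ω
    have h2 := h1.comp t ((hasDerivAt_id t).add_const y)
    rw [mul_one] at h2
    rw [E.F_shift] at h2
    exact h2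
  have hg : ∀ t, HasDerivAt (fun u => E.w (s - y) u (E.tau y ω))
      (E.F t (E.w (s - y) t (E.tau y ω)) (E.tau y ω)) t :=
    fun t => E.w_hasDeriv (s - y) t (E.tau y ω)
  have h0 : E.w s (s - y + y) ω = E.w (s - y) (s - y) (E.tau y ω) := by
    rw [E.w_self, sub_add_cancel, E.w_self]
  have := E.sol_unique (E.tau y ω) hf hg h0 (x - y)
  simpa [sub_add_cancel] using this

/-- The stationary solution candidate: pullback limit. -/
noncomputable def Env.u (x : ℝ) (ω : Ω) : ℝ := ⨅ n : ℕ, E.w (x - n) x ω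

lemma Env.u_bddBelow (x : ℝ) (ω : Ω) :
    BddBelow (Set.range fun n : ℕ => E.w (x - n) x ω) := by
  refine ⟨E.p1, ?_⟩
  rintro v ⟨n, rfl⟩
  exact (E.w_mem ω (by linarith [Nat.cast_nonneg (α := ℝ) n] : x - n ≤ x)).1

lemma Env.u_mem (x : ℝ) (ω : Ω) : E.u x ω ∈ Set.Icc E.p1 E.p2 := by
  constructor
  · exact le_ciInf fun n =>
      (E.w_mem ω (by linarith [Nat.cast_nonneg (α := ℝ) n] : x - n ≤ x)).1
  · refine ciInf_le_of_le (E.u_bddBelow x ω) 0 ?_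
    have : E.w (x - (0:ℕ)) x ω = E.p2 := by
      norm_num
      exact E.w_self x ω
    rw [this]

lemma Env.u_lim (t : ℝ) (ω : Ω) {s : ℕ → ℝ} (hs : Antitone s) (hst : ∀ m, s m ≤ t)
    (hbot : Tendsto s atTop atBot) :
    Tendsto (fun m => E.w (s m) t ω) atTop (𝓝 (E.u t ω)) := by
  have hanti : Antitone fun m => E.w (s m) t ω :=
    fun m m' hmm' => E.w_mono ω (hs hmm') (hst m)
  have hbdd : BddBelow (Set.range fun m => E.w (s m) t ω) := by
    refine ⟨E.p1, ?_⟩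
    rintro v ⟨m, rfl⟩
    exact (E.w_mem ω (hst m)).1
  have htend := tendsto_atTop_ciInf hanti hbdd
  have hequ : (⨅ m, E.w (s m) t ω) = E.u t ω := by
    apply le_antisymm
    · apply le_ciInf
      intro n
      obtain ⟨m, hm⟩ := (hbot.eventually (eventually_le_atBot (t - n))).exists
      exact ciInf_le_of_le hbdd m
        (E.w_mono ω hm (by linarith [Nat.cast_nonneg (α := ℝ) n] : t - n ≤ t))
    · apply le_ciInf
      intro m
      have hn : t - (⌈t - s m⌉₊ : ℝ) ≤ s m := by
        have := Nat.le_ceil (t - s m)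
        linarith
      exact ciInf_le_of_le (E.u_bddBelow t ω) ⌈t - s m⌉₊ (E.w_mono ω hn (hst m))
  rwa [hequ] at htend

lemma tendsto_sub_nat_atBot (c : ℝ) : Tendsto (fun m : ℕ => c - (m : ℝ)) atTop atBot := by
  rw [Filter.tendsto_atBot]
  intro b
  rw [eventually_atTop]
  refine ⟨⌈c - b⌉₊, fun m hm => ?_⟩
  have h1 := Nat.le_ceil (c - b)
  have h2 : (⌈c - b⌉₊ : ℝ) ≤ (m : ℝ) := Nat.cast_le.mpr hm
  linarith

lemma Env.u_integral (y x : ℝ) (ω : Ω) :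
    E.u x ω = E.u y ω + ∫ t in y..x, E.F t (E.u t ω) ω := by
  set s : ℕ → ℝ := fun m => min x y - m with hsdef
  have hs : Antitone s := by
    intro m m' h
    simp only [hsdef]
    have : (m : ℝ) ≤ (m' : ℝ) := Nat.cast_le.mpr h
    linarith
  have hbot : Tendsto s atTop atBot := tendsto_sub_nat_atBot _
  have hsx : ∀ m, s m ≤ x := fun m => by
    simp only [hsdef]
    have := Nat.cast_nonneg (α := ℝ) m
    have := min_le_left x y
    linarith
  have hsy : ∀ m, s m ≤ y := fun m => by
    simp only [hsdef]
    have := Nat.cast_nonneg (α := ℝ) m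
    have := min_le_right x y
    linarith
  have h1 : Tendsto (fun m => E.w (s m) x ω - E.w (s m) y ω) atTop
      (𝓝 (E.u x ω - E.u y ω)) :=
    (E.u_lim x ω hs hsx hbot).sub (E.u_lim y ω hs hsy hbot)
  obtain ⟨α, hα0, hα⟩ := E.exists_alpha y x ω
  have h2 : Tendsto (fun m => ∫ t in y..x, E.F t (E.w (s m) t ω) ω) atTop
      (𝓝 (∫ t in y..x, E.F t (E.u t ω) ω)) := by
    apply intervalIntegral.tendsto_integral_filter_of_dominated_convergence
      (bound := fun _ => (|E.lam| + E.C) / α)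
    · exact Eventually.of_forall fun m =>
        ((E.cont_comp (E.w_cont (s m) ω) ω)).aestronglyMeasurable
    · refine Eventually.of_forall fun m => MeasureTheory.ae_of_all _ fun t ht => ?_
      rw [Real.norm_eq_abs]
      refine (E.F_bound t (E.w (s m) t ω) ω).trans ?_
      exact div_le_div_of_nonneg_left
        (by linarith [abs_nonneg E.lam, E.C_nonneg ω]) hα0 (hα t (Set.uIoc_subset_uIcc ht))
    · exact intervalIntegrable_const
    · refine MeasureTheory.ae_of_all _ fun t ht => ?_
      have hst : ∀ m, s m ≤ t := fun m => by
        have h3 : min y x < t := ht.1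
        have h4 : min x y = min y x := min_comm x y
        have := hsx m; have := hsy m
        simp only [hsdef] at *
        have := Nat.cast_nonneg (α := ℝ) m
        linarith
      exact ((E.F_cont_p t ω).tendsto _).comp (E.u_lim t ω hs hst hbot)
  have h3 : ∀ m, E.w (s m) x ω - E.w (s m) y ω = ∫ t in y..x, E.F t (E.w (s m) t ω) ω :=
    fun m => E.w_sub (s m) x y ω
  rw [funext h3] at h1
  have := tendsto_nhds_unique h1 h2
  linarith [this]

lemma Env.u_cont (ω : Ω) : Continuous fun x => E.u x ω := by
  rw [continuous_iff_continuousAt]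
  intro x₀
  obtain ⟨α, hα0, hα⟩ := E.exists_alpha (x₀ - 1) (x₀ + 1) ω
  unfold ContinuousAt
  rw [tendsto_iff_dist_tendsto_zero]
  have hev : ∀ᶠ x in 𝓝 x₀, dist (E.u x ω) (E.u x₀ ω)
      ≤ (|E.lam| + E.C) / α * |x - x₀| := by
    filter_upwards [Metric.ball_mem_nhds x₀ one_pos] with x hx
    have hJ : Set.uIcc x₀ x ⊆ Set.uIcc (x₀ - 1) (x₀ + 1) := by
      apply Set.uIcc_subset_uIcc
      · rw [Set.uIcc_of_le (by linarith)]
        exact ⟨by linarith, by linarith⟩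
      · rw [Set.uIcc_of_le (by linarith)]
        rw [Metric.mem_ball, Real.dist_eq, abs_lt] at hx
        exact ⟨by linarith, by linarith⟩
    have hsub : E.u x ω - E.u x₀ ω = ∫ t in x₀..x, E.F t (E.u t ω) ω := by
      rw [E.u_integral x₀ x ω]; ring
    rw [Real.dist_eq, hsub]
    have hCb : ∀ t ∈ Set.uIoc x₀ x, ‖E.F t (E.u t ω) ω‖ ≤ (|E.lam| + E.C) / α := by
      intro t ht
      rw [Real.norm_eq_abs]
      refine (E.F_bound t (E.u t ω) ω).trans ?_
      exact div_le_div_of_nonneg_left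
        (by linarith [abs_nonneg E.lam, E.C_nonneg ω]) hα0
        (hα t (hJ (Set.uIoc_subset_uIcc ht)))
    have hle := intervalIntegral.norm_integral_le_of_norm_le_const hCb
    rwa [Real.norm_eq_abs] at hle
  have h0 : Tendsto (fun x => (|E.lam| + E.C) / α * |x - x₀|) (𝓝 x₀) (𝓝 0) := by
    have hcont : Continuous fun x : ℝ => (|E.lam| + E.C) / α * |x - x₀| :=
      continuous_const.mul ((continuous_id.sub continuous_const).abs)
    simpa using hcont.tendsto x₀
  exact squeeze_zero' (Eventually.of_forall fun _ => dist_nonneg) hev h0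

lemma Env.u_hasDeriv (x : ℝ) (ω : Ω) :
    HasDerivAt (fun y => E.u y ω) (E.F x (E.u x ω) ω) x := by
  have hg : Continuous fun t => E.F t (E.u t ω) ω := E.cont_comp (E.u_cont ω) ω
  have h := (hasDerivAt_const x (E.u 0 ω)).fun_add (primitive_hasDerivAt hg (0:ℝ) x)
  have heq : (fun y => E.u 0 ω + ∫ t in (0:ℝ)..y, E.F t (E.u t ω) ω) = fun y => E.u y ω :=
    funext fun y => (E.u_integral 0 y ω).symm
  rw [heq] at h
  simpa using h

lemma Env.u_stat (x : ℝ) (ω : Ω) : E.u x ω = E.u 0 (E.tau x ω) := by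
  unfold Env.u
  congr 1
  funext n
  have := E.w_shift (x - n) x x ω
  rw [this]
  norm_num

lemma measurable_ciInf_seq {f : ℕ → Ω → ℝ} (hf : ∀ n, Measurable (f n)) (c : ℝ)
    (hb : ∀ n ω, c ≤ f n ω) : Measurable fun ω => ⨅ n, f n ω := by
  set g : ℕ → Ω → ℝ := fun k => Nat.rec (f 0) (fun k gk => fun ω => min (gk ω) (f (k+1) ω)) k
    with hgdef
  have hgmeas : ∀ k, Measurable (g k) := by
    intro k
    induction k with
    | zero => exact hf 0
    | succ k IH => exact IH.min (hf (k+1))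
  have hganti : ∀ ω, Antitone fun k => g k ω := by
    intro ω
    apply antitone_nat_of_succ_le
    intro k
    exact min_le_left _ _
  have hgle : ∀ k ω, g k ω ≤ f k ω := by
    intro k ω
    induction k with
    | zero => exact le_refl _
    | succ k IH => exact min_le_right _ _
  have hgge : ∀ k ω, (⨅ n, f n ω) ≤ g k ω := by
    intro k ω
    have hbdd : BddBelow (Set.range fun n => f n ω) := by
      refine ⟨c, ?_⟩; rintro v ⟨n, rfl⟩; exact hb n ω
    induction k with
    | zero => exact ciInf_le hbdd 0
    | succ k IH => exact le_min IH (ciInf_le hbdd (k+1))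
  apply measurable_of_tendsto_metrizable hgmeas
  rw [tendsto_pi_nhds]
  intro ω
  have hbddg : BddBelow (Set.range fun k => g k ω) := by
    refine ⟨⨅ n, f n ω, ?_⟩; rintro v ⟨k, rfl⟩; exact hgge k ω
  have htend := tendsto_atTop_ciInf (hganti ω) hbddg
  have hequ : (⨅ k, g k ω) = ⨅ n, f n ω := by
    apply le_antisymm
    · apply le_ciInf
      intro n
      exact ciInf_le_of_le hbddg n (hgle n ω)
    · exact le_ciInf fun k => hgge k ω
  rwa [hequ] at htend

lemma Env.u_meas : Measurable fun q : ℝ × Ω => E.u q.1 q.2 := by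
  apply measurable_uncurry_of_continuous_of_measurable (u := fun x ω => E.u x ω)
  · exact fun ω => E.u_cont ω
  · intro x
    apply measurable_ciInf_seq (f := fun n ω => E.w (x - n) x ω)
      (fun n => E.w_meas (x - n) x) E.p1
    intro n ω
    exact (E.w_mem ω (by linarith [Nat.cast_nonneg (α := ℝ) n] : x - n ≤ x)).1

lemma Env.u_ode (x : ℝ) (ω : Ω) :
    E.a x ω * deriv (fun y => E.u y ω) x + E.Hf (E.u x ω) x ω = E.lam := by
  rw [(E.u_hasDeriv x ω).deriv]
  have hproj : E.proj (E.u x ω) = E.u x ω := E.proj_eq_self (E.u_mem x ω)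
  unfold Env.F
  rw [hproj, mul_div_assoc']
  rw [mul_div_cancel_left₀ _ (E.a_pos x ω).ne']
  ring

lemma Env.u_contDiff (ω : Ω) : ContDiff ℝ 1 fun x => E.u x ω := by
  rw [contDiff_one_iff_deriv]
  constructor
  · exact fun x => (E.u_hasDeriv x ω).differentiableAt
  · have : deriv (fun y => E.u y ω) = fun x => E.F x (E.u x ω) ω :=
      funext fun x => (E.u_hasDeriv x ω).deriv
    rw [this]
    exact E.cont_comp (E.u_cont ω) ω

/-- Packaged conclusion of the core construction. -/
lemma Env.final :
    ∃ f : ℝ → Ω → ℝ,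
      (Measurable fun q : ℝ × Ω => f q.1 q.2) ∧
      (∀ x ω, f x ω = f 0 (E.tau x ω)) ∧
      (∀ ω, ContDiff ℝ 1 fun x => f x ω) ∧
      (∀ x ω, E.a x ω * deriv (fun y => f y ω) x + E.Hf (f x ω) x ω = E.lam) ∧
      (∀ x ω, E.p1 ≤ f x ω ∧ f x ω ≤ E.p2) :=
  ⟨E.u, E.u_meas, fun x ω => E.u_stat x ω, fun ω => E.u_contDiff ω,
    fun x ω => E.u_ode x ω, fun x ω => ⟨(E.u_mem x ω).1, (E.u_mem x ω).2⟩⟩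

end HJCore

open MeasureTheory Filter Set

structure HJSetting {Ω : Type} [MeasurableSpace Ω] (P : Measure Ω) (τ : ℝ → Ω → Ω)
    (a : ℝ → Ω → ℝ) (H : ℝ → ℝ → Ω → ℝ) (G_L G_U : ℝ → ℝ) : Prop where
  prob : IsProbabilityMeasure P
  meas_tau : Measurable fun q : ℝ × Ω => τ q.1 q.2
  mp_tau : ∀ x, MeasurePreserving (τ x) P P
  tau_zero : ∀ ω, τ 0 ω = ω
  tau_add : ∀ x y ω, τ (x + y) ω = τ x (τ y ω)
  ergodic : ∀ A : Set Ω, MeasurableSet A → (∀ x, τ x ⁻¹' A = A) → P A = 0 ∨ P A = 1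
  meas_a : Measurable fun q : ℝ × Ω => a q.1 q.2
  a_pos : ∀ x ω, 0 < a x ω
  a_le_one : ∀ x ω, a x ω ≤ 1
  a_stat : ∀ x ω, a x ω = a 0 (τ x ω)
  a_sqrt_lip : ∃ κ > (0:ℝ), ∀ x ω, |Real.sqrt (a x ω) - Real.sqrt (a 0 ω)| ≤ κ * |x|
  meas_H : Measurable fun q : ℝ × ℝ × Ω => H q.1 q.2.1 q.2.2
  H_stat : ∀ p x ω, H p x ω = H p 0 (τ x ω)
  GL_cont : Continuous G_L
  GU_cont : Continuous G_U
  GL_even : ∀ p, G_L (-p) = G_L p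
  GU_even : ∀ p, G_U (-p) = G_U p
  GL_mono : MonotoneOn G_L (Ici 0)
  GU_mono : MonotoneOn G_U (Ici 0)
  GL_coercive : Tendsto G_L atTop atTop
  GU_coercive : Tendsto G_U atTop atTop
  H_lower : ∀ p ω, G_L p ≤ H p 0 ω
  H_upper : ∀ p ω, H p 0 ω ≤ G_U p
  H_lip : ∀ R > (0:ℝ), ∃ K > (0:ℝ), ∀ p q ω, |p| ≤ R → |q| ≤ R →
      |H p 0 ω - H q 0 ω| ≤ K * |p - q|
  H_mod : ∀ R > (0:ℝ), ∃ m : ℝ → ℝ, (∀ r, 0 ≤ m r) ∧ MonotoneOn m (Ici 0) ∧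
      Tendsto m (nhdsWithin 0 (Ioi 0)) (nhds 0) ∧
      ∀ p x ω, |p| ≤ R → |H p x ω - H p 0 ω| ≤ m |x|

/-- `f` is a stationary solution of `a(x,ω) f' + H(f,x,ω) = lam`. -/
def StatSol {Ω : Type} [MeasurableSpace Ω] (P : Measure Ω) (τ : ℝ → Ω → Ω)
    (a : ℝ → Ω → ℝ) (H : ℝ → ℝ → Ω → ℝ) (lam : ℝ) (f : ℝ → Ω → ℝ) : Prop :=
  (Measurable fun q : ℝ × Ω => f q.1 q.2) ∧
  (∀ x ω, f x ω = f 0 (τ x ω)) ∧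
  (∀ ω, ContDiff ℝ 1 fun x => f x ω) ∧
  (∀ᵐ ω ∂P, (∃ M, ∀ x, |f x ω| ≤ M) ∧
    ∀ x, a x ω * deriv (fun y => f y ω) x + H (f x ω) x ω = lam)

theorem exists_stationary_solution_between_constants
    {Ω : Type} [MeasurableSpace Ω] (P : Measure Ω) (τ : ℝ → Ω → Ω)
    (a : ℝ → Ω → ℝ) (H : ℝ → ℝ → Ω → ℝ) (G_L G_U : ℝ → ℝ)
    (hset : HJSetting P τ a H G_L G_U)
    (lam p₁ p₂ : ℝ) (hp : p₁ < p₂)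
    (hcase : (G_U p₁ < lam ∧ lam < G_L p₂) ∨ (G_U p₂ < lam ∧ lam < G_L p₁)) :
    ∃ f : ℝ → Ω → ℝ, StatSol P τ a H lam f ∧
      ∀ ω x, p₁ ≤ f x ω ∧ f x ω ≤ p₂ := by
  classical
  obtain ⟨κ, hκ0, hκ⟩ := hset.a_sqrt_lip
  have hHshift : ∀ p x y ω, H p (x + y) ω = H p x (τ y ω) := by
    intro p x y ω
    rw [hset.H_stat p (x+y) ω, hset.tau_add, ← hset.H_stat]
  have hashift : ∀ x y ω, a (x + y) ω = a x (τ y ω) := by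
    intro x y ω
    rw [hset.a_stat (x+y) ω, hset.tau_add, ← hset.a_stat]
  have hsq : ∀ x y ω, |Real.sqrt (a x ω) - Real.sqrt (a y ω)| ≤ κ * |x - y| := by
    intro x y ω
    have h1 : a x ω = a (x - y) (τ y ω) := by
      rw [← hashift]; norm_num
    have h2 : a y ω = a 0 (τ y ω) := hset.a_stat y ω
    rw [h1, h2]
    exact hκ (x - y) (τ y ω)
  have hacont : ∀ ω, Continuous fun x => a x ω := by
    intro ω
    have hsc : Continuous fun x => Real.sqrt (a x ω) := by
      rw [continuous_iff_continuousAt]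
      intro x₀
      unfold ContinuousAt
      rw [tendsto_iff_dist_tendsto_zero]
      have hb : ∀ x, dist (Real.sqrt (a x ω)) (Real.sqrt (a x₀ ω)) ≤ κ * |x - x₀| := by
        intro x; rw [Real.dist_eq]; exact hsq x x₀ ω
      have hcc : Tendsto (fun x : ℝ => κ * |x - x₀|) (𝓝 x₀) (𝓝 0) := by
        have h := (continuous_const.mul
          ((continuous_id.sub continuous_const).abs) :
            Continuous fun x : ℝ => κ * |x - x₀|).tendsto x₀
        simpa [Pi.mul_def] using h
      exact squeeze_zero (fun _ => dist_nonneg) hb hcc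
    have heq : (fun x => a x ω) = fun x => (Real.sqrt (a x ω))^2 :=
      funext fun x => (Real.sq_sqrt (hset.a_pos x ω).le).symm
    rw [heq]
    exact hsc.pow 2
  set R : ℝ := max |p₁| |p₂| + 1 with hR
  have hRpos : 0 < R := by positivity
  have hmemR : ∀ p ∈ Set.Icc p₁ p₂, |p| ≤ R := by
    intro p hp'
    rw [abs_le]
    have h1 : -|p₁| ≤ p₁ := neg_abs_le p₁
    have h2 : p₂ ≤ |p₂| := le_abs_self p₂
    have h3 : |p₁| ≤ max |p₁| |p₂| := le_max_left _ _
    have h4 : |p₂| ≤ max |p₁| |p₂| := le_max_right _ _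
    exact ⟨by simp only [hR]; linarith [hp'.1], by simp only [hR]; linarith [hp'.2]⟩
  obtain ⟨K, hK0, hKlip⟩ := hset.H_lip R hRpos
  obtain ⟨m, hm0, hmmono, hmtend, hmbnd⟩ := hset.H_mod R hRpos
  obtain ⟨C₁, hC₁⟩ := isCompact_Icc.exists_bound_of_continuousOn
    (f := G_L) (s := Set.Icc p₁ p₂) hset.GL_cont.continuousOn
  obtain ⟨C₂, hC₂⟩ := isCompact_Icc.exists_bound_of_continuousOn
    (f := G_U) (s := Set.Icc p₁ p₂) hset.GU_cont.continuousOn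
  set C : ℝ := max C₁ C₂ with hCdef
  have hHbound : ∀ p x ω, p ∈ Set.Icc p₁ p₂ → |H p x ω| ≤ C := by
    intro p x ω hp'
    rw [hset.H_stat p x ω, abs_le]
    have h1 := hset.H_lower p (τ x ω)
    have h2 := hset.H_upper p (τ x ω)
    have h3 := hC₁ p hp'
    have h4 := hC₂ p hp'
    rw [Real.norm_eq_abs] at h3 h4
    have h5 := abs_le.mp h3
    have h6 := abs_le.mp h4
    have h7 : C₁ ≤ C := le_max_left _ _
    have h8 : C₂ ≤ C := le_max_right _ _
    exact ⟨by linarith [h5.1], by linarith [h6.2]⟩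
  have hHlip : ∀ p q x ω, p ∈ Set.Icc p₁ p₂ → q ∈ Set.Icc p₁ p₂ →
      |H p x ω - H q x ω| ≤ K * |p - q| := by
    intro p q x ω hp' hq'
    rw [hset.H_stat p x ω, hset.H_stat q x ω]
    exact hKlip p q (τ x ω) (hmemR p hp') (hmemR q hq')
  have hHcontx : ∀ p ω, p ∈ Set.Icc p₁ p₂ → Continuous fun x : ℝ => H p x ω := by
    intro p ω hp'
    rw [continuous_iff_continuousAt]
    intro y
    rw [Metric.continuousAt_iff]
    intro ε hε
    obtain ⟨δ, hδ0, hδ⟩ := (Metric.tendsto_nhdsWithin_nhds.mp hmtend) ε hε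
    refine ⟨δ, hδ0, fun {x} hxy => ?_⟩
    rcases eq_or_ne x y with rfl | hne
    · simpa using hε
    · have hdist : H p x ω = H p (x - y) (τ y ω) := by
        rw [← hHshift]; norm_num
      have h2 : H p y ω = H p 0 (τ y ω) := hset.H_stat p y ω
      have h3 := hmbnd p (x - y) (τ y ω) (hmemR p hp')
      have h4 : |x - y| ∈ Set.Ioi (0:ℝ) := abs_pos.mpr (sub_ne_zero.mpr hne)
      have h5 : dist |x - y| 0 < δ := by
        rw [Real.dist_eq, sub_zero, abs_abs]
        rw [Real.dist_eq] at hxy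
        exact hxy
      have h6 := hδ h4 h5
      rw [Real.dist_eq, sub_zero, abs_of_nonneg (hm0 _)] at h6
      rw [Real.dist_eq, hdist, h2]
      exact lt_of_le_of_lt h3 h6
  have habs : ∀ v : ℝ, p₁ ≤ v → v ≤ p₂ → |v| ≤ max |p₁| |p₂| := by
    intro v h1 h2
    rw [abs_le]
    constructor
    · linarith [neg_abs_le p₁, le_max_left |p₁| |p₂|]
    · linarith [le_abs_self p₂, le_max_right |p₁| |p₂|]
  rcases hcase with ⟨hc1, hc2⟩ | ⟨hc1, hc2⟩
  · set E : HJCore.Env Ω :=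
      { tau := τ, a := a, Hf := H, lam := lam, p1 := p₁, p2 := p₂,
        C := C, K := K, hp := hp, K_pos := hK0,
        meas_a := hset.meas_a, a_pos := hset.a_pos, a_cont := hacont,
        meas_H := hset.meas_H, H_shift := hHshift, a_shift := hashift,
        H_bound := hHbound, H_lip := hHlip, H_contx := hHcontx,
        sign_hi := fun x ω => by
          have h := hset.H_lower p₂ (τ x ω)
          rw [hset.H_stat p₂ x ω]
          linarith,
        sign_lo := fun x ω => by
          have h := hset.H_upper p₁ (τ x ω)
          rw [hset.H_stat p₁ x ω]
          linarith } with hE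
    obtain ⟨f, hmeas, hstat, hC1f, hode, hbnd⟩ := E.final
    refine ⟨f, ⟨hmeas, fun x ω => hstat x ω, hC1f, ?_⟩, fun ω x => hbnd x ω⟩
    refine Eventually.of_forall fun ω => ⟨⟨max |p₁| |p₂|, fun x => ?_⟩, fun x => hode x ω⟩
    exact habs _ (hbnd x ω).1 (hbnd x ω).2
  · set E : HJCore.Env Ω :=
      { tau := fun x ω => τ (-x) ω, a := fun x ω => a (-x) ω,
        Hf := fun p x ω => 2 * lam - H p (-x) ω, lam := lam, p1 := p₁, p2 := p₂,
        C := 2 * |lam| + C, K := K, hp := hp, K_pos := hK0,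
        meas_a := hset.meas_a.comp ((measurable_fst.neg).prodMk measurable_snd),
        a_pos := fun x ω => hset.a_pos (-x) ω,
        a_cont := fun ω => (hacont ω).comp continuous_neg,
        meas_H := by
          refine measurable_const.sub ?_
          exact hset.meas_H.comp ((measurable_fst).prodMk
            (((measurable_fst.comp measurable_snd).neg).prodMk
              (measurable_snd.comp measurable_snd))),
        H_shift := by
          intro p x y ω
          show 2 * lam - H p (-(x + y)) ω = 2 * lam - H p (-x) (τ (-y) ω)
          have hneg : -(x + y) = -x + -y := by ring
          rw [hneg, hHshift]
        a_shift := by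
          intro x y ω
          show a (-(x + y)) ω = a (-x) (τ (-y) ω)
          have hneg : -(x + y) = -x + -y := by ring
          rw [hneg, hashift]
        H_bound := by
          intro p x ω hp'
          show |2 * lam - H p (-x) ω| ≤ 2 * |lam| + C
          have h1 := hHbound p (-x) ω hp'
          calc |2 * lam - H p (-x) ω| ≤ |2 * lam| + |H p (-x) ω| := abs_sub _ _
            _ ≤ 2 * |lam| + C := by
                rw [abs_mul]
                norm_num
                linarith
        H_lip := by
          intro p q x ω hp' hq'
          show |2 * lam - H p (-x) ω - (2 * lam - H q (-x) ω)| ≤ K * |p - q|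
          have h1 := hHlip p q (-x) ω hp' hq'
          have : 2 * lam - H p (-x) ω - (2 * lam - H q (-x) ω)
              = -(H p (-x) ω - H q (-x) ω) := by ring
          rw [this, abs_neg]
          exact h1
        H_contx := fun p ω hp' =>
          continuous_const.sub ((hHcontx p ω hp').comp continuous_neg),
        sign_hi := fun x ω => by
          show lam < 2 * lam - H p₂ (-x) ω
          have h := hset.H_upper p₂ (τ (-x) ω)
          rw [hset.H_stat p₂ (-x) ω]
          linarith,
        sign_lo := fun x ω => by
          show 2 * lam - H p₁ (-x) ω < lam
          have h := hset.H_lower p₁ (τ (-x) ω)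
          rw [hset.H_stat p₁ (-x) ω]
          linarith } with hE
    obtain ⟨f₀, hmeas, hstat, hC1f, hode, hbnd⟩ := E.final
    have hnegC1 : ContDiff ℝ 1 fun x : ℝ => -x := contDiff_id.neg
    refine ⟨fun x ω => f₀ (-x) ω, ⟨?_, ?_, ?_, ?_⟩, ?_⟩
    · exact hmeas.comp ((measurable_fst.neg).prodMk measurable_snd)
    · intro x ω
      have h1 := hstat (-x) ω
      simp only [neg_zero] at h1 ⊢
      convert h1 using 3
      simp [neg_neg]
    · intro ω
      exact (hC1f ω).comp hnegC1
    · refine Eventually.of_forall fun ω => ⟨⟨max |p₁| |p₂|, fun x => ?_⟩, fun x => ?_⟩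
      · exact habs _ (hbnd (-x) ω).1 (hbnd (-x) ω).2
      · -- the ODE
        have hdiff : Differentiable ℝ fun y => f₀ y ω :=
          (hC1f ω).differentiable one_ne_zero
        have hd : HasDerivAt (fun y => f₀ y ω) (deriv (fun y => f₀ y ω) (-x)) (-x) :=
          (hdiff (-x)).hasDerivAt
        have hcomp := hd.comp x (hasDerivAt_neg x)
        have hderiv : deriv (fun y => f₀ (-y) ω) x
            = deriv (fun y => f₀ y ω) (-x) * (-1) := hcomp.deriv
        have hodex := hode (-x) ω
        have he1 : E.a (-x) ω = a x ω := by
          show a (-(-x)) ω = a x ω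
          rw [neg_neg]
        have he2 : E.Hf (f₀ (-x) ω) (-x) ω = 2 * lam - H (f₀ (-x) ω) x ω := by
          show 2 * lam - H (f₀ (-x) ω) (-(-x)) ω = _
          rw [neg_neg]
        rw [he1, he2] at hodex
        rw [hderiv]
        linarith
    · intro ω x
      exact ⟨(hbnd (-x) ω).1, (hbnd (-x) ω).2⟩
end
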